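/- arXiv:1907.07698 — 6 statements merged into one kernel-verified Lean document; each statement's English description precedes it below -/
import Mathlib

section
/- There exists a compact set C contained in the open interval (0,1) with positive Lebesgue measure such that the function f : [0,1] → ℝ defined by f(x) = ∫₀ˣ 1_C(t) dt satisfies: (i) |f(x) − f(y)| < d(x,y) for all x ≠ y in [0,1]; and (ii) sup_{x≠y in [0,1]} |f(x) − f(y)|/d(x,y) = 1. In other words, f has least Lipschitz constant exactly 1 with respect to the metric d, but f does not strongly attain its norm. -/
set_option maxHeartbeats 1000000

open Set Real MeasureTheory

noncomputable def dy (m k : ℕ) : ℝ := k / 2 ^ m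
noncomputable def rad (m : ℕ) : ℝ := (4 ^ m)⁻¹ / 4
def gapset (m k : ℕ) : Set ℝ := Ioo (dy m k - rad m) (dy m k + rad m)
def Uset : Set ℝ := ⋃ (m : ℕ) (k : ℕ) (_ : k ≤ 2 ^ (m + 1)), gapset (m + 1) k
noncomputable def Cset : Set ℝ := Icc (1/8 : ℝ) (7/8) \ Uset

lemma rad_pos (m : ℕ) : 0 < rad m := by unfold rad; positivity

lemma isOpen_Uset : IsOpen Uset :=
  isOpen_iUnion fun _ => isOpen_iUnion fun _ => isOpen_iUnion fun _ => isOpen_Ioo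

lemma isCompact_Cset : IsCompact Cset :=
  isCompact_Icc.of_isClosed_subset (isClosed_Icc.sdiff isOpen_Uset) diff_subset

lemma Cset_subset : Cset ⊆ Ioo (0:ℝ) 1 := by
  intro x hx
  have h := hx.1
  constructor
  · linarith [h.1]
  · linarith [h.2]


lemma volume_gapset (m k : ℕ) : volume (gapset m k) = ENNReal.ofReal (2 * rad m) := by
  rw [gapset, Real.volume_Ioo]; ring_nf

lemma geo_shift (r : ℝ) (h0 : 0 ≤ r) (h1 : r < 1) : ∑' m : ℕ, r ^ (m+1) = r / (1 - r) := by
  simp_rw [pow_succ]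
  rw [tsum_mul_right, tsum_geometric_of_lt_one h0 h1, div_eq_mul_inv, mul_comm]

lemma geo_shift_summable (r : ℝ) (h0 : 0 ≤ r) (h1 : r < 1) :
    Summable (fun m : ℕ => r ^ (m+1)) := by
  simp_rw [pow_succ]
  exact (summable_geometric_of_lt_one h0 h1).mul_right r

noncomputable def lvlB (m : ℕ) : ℝ := ((1/2:ℝ)^(m+1) + (1/4)^(m+1))/2

lemma lvlB_eq (m : ℕ) : ((2:ℝ) ^ (m+1) + 1) * (2 * rad (m+1)) = lvlB m := by
  have h4 : (4:ℝ) ^ (m+1) = (2 ^ (m+1)) * (2 ^ (m+1)) := by rw [← mul_pow]; norm_num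
  have h2 : (0:ℝ) < 2 ^ (m+1) := by positivity
  rw [rad, lvlB]
  field_simp [h4]
  rw [mul_add, mul_right_comm, ← mul_pow, mul_right_comm (4 ^ (m+1)) 4 ((1/4:ℝ)^(m+1)), ← mul_pow]
  norm_num
  ring

lemma lvlB_summable : Summable lvlB := by
  unfold lvlB
  exact ((geo_shift_summable (1/2) (by norm_num) (by norm_num)).add
    (geo_shift_summable (1/4) (by norm_num) (by norm_num))).div_const 2

lemma lvlB_tsum : ∑' m : ℕ, lvlB m = 2/3 := by
  unfold lvlB
  simp_rw [div_eq_mul_inv ((1/2:ℝ)^(_+1) + (1/4:ℝ)^(_+1))]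
  rw [tsum_mul_right, Summable.tsum_add (geo_shift_summable (1/2) (by norm_num) (by norm_num))
      (geo_shift_summable (1/4) (by norm_num) (by norm_num)),
    geo_shift _ (by norm_num) (by norm_num), geo_shift _ (by norm_num) (by norm_num)]
  norm_num

lemma volume_level_le (m : ℕ) :
    volume (⋃ (k : ℕ) (_ : k ≤ 2 ^ (m + 1)), gapset (m + 1) k) ≤ ENNReal.ofReal (lvlB m) := by
  have hsub : (⋃ (k : ℕ) (_ : k ≤ 2 ^ (m + 1)), gapset (m + 1) k) ⊆
      ⋃ k ∈ Finset.range (2 ^ (m + 1) + 1), gapset (m + 1) k := by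
    refine iUnion₂_subset fun k hk => ?_
    exact subset_biUnion_of_mem (Finset.mem_range.mpr (Nat.lt_succ_iff.mpr hk))
  refine (measure_mono hsub).trans ?_
  refine (measure_biUnion_finset_le _ _).trans (le_of_eq ?_)
  calc ∑ k ∈ Finset.range (2 ^ (m + 1) + 1), volume (gapset (m+1) k)
      = ∑ k ∈ Finset.range (2 ^ (m + 1) + 1), ENNReal.ofReal (2 * rad (m+1)) := by
        simp [volume_gapset]
    _ = (2 ^ (m + 1) + 1 : ℕ) * ENNReal.ofReal (2 * rad (m+1)) := by
        rw [Finset.sum_const, Finset.card_range, nsmul_eq_mul]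
    _ = ENNReal.ofReal ((2 ^ (m + 1) + 1 : ℕ) * (2 * rad (m+1))) := by
        rw [← ENNReal.ofReal_natCast (2 ^ (m + 1) + 1),
          ← ENNReal.ofReal_mul (by positivity : (0:ℝ) ≤ ((2 ^ (m + 1) + 1 : ℕ) : ℝ))]
    _ = ENNReal.ofReal (lvlB m) := by
        rw [← lvlB_eq m]; congr 1; push_cast; ring

lemma volume_Uset_le : volume Uset ≤ ENNReal.ofReal (2/3) := by
  refine (measure_iUnion_le _).trans ?_
  refine le_trans (ENNReal.tsum_le_tsum fun m => volume_level_le m) ?_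
  rw [← ENNReal.ofReal_tsum_of_nonneg (fun m => by unfold lvlB; positivity) lvlB_summable,
    lvlB_tsum]

lemma volume_Cset_ge : ENNReal.ofReal (1/12) ≤ volume Cset := by
  have h1 : volume (Icc (1/8 : ℝ) (7/8)) ≤ volume Cset + volume Uset := by
    refine le_trans (measure_mono ?_) (measure_union_le _ _)
    intro x hx
    by_cases hU : x ∈ Uset
    · exact Or.inr hU
    · exact Or.inl ⟨hx, hU⟩
  rw [Real.volume_Icc] at h1
  have h2 : volume Cset + volume Uset ≤ volume Cset + ENNReal.ofReal (2/3) :=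
    add_le_add_right volume_Uset_le _
  have h3 : ENNReal.ofReal (7/8 - 1/8) ≤ volume Cset + ENNReal.ofReal (2/3) := h1.trans h2
  have h4 : ENNReal.ofReal (7/8 - 1/8) = ENNReal.ofReal (1/12) + ENNReal.ofReal (2/3) := by
    rw [← ENNReal.ofReal_add (by norm_num) (by norm_num)]; norm_num
  rw [h4] at h3
  exact ENNReal.add_le_add_iff_right (by norm_num) |>.mp h3

lemma volume_Cset_pos : 0 < volume Cset :=
  lt_of_lt_of_le (by norm_num) volume_Cset_ge

lemma four_pow_eq (m : ℕ) : ((4:ℝ) ^ m) = 2 ^ m * 2 ^ m := by rw [← mul_pow]; norm_num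

lemma gapset_subset_Uset {m k : ℕ} (hm : 1 ≤ m) (hk : k ≤ 2 ^ m) : gapset m k ⊆ Uset := by
  obtain ⟨m', rfl⟩ := Nat.exists_eq_add_of_le hm
  intro t ht
  exact mem_iUnion.mpr ⟨m', mem_iUnion.mpr ⟨k, mem_iUnion.mpr ⟨by simpa [Nat.add_comm] using hk,
    by simpa [Nat.add_comm] using ht⟩⟩⟩

lemma exists_gap {u v : ℝ} (hu : 1/8 ≤ u) (huv : u < v) (hv : v ≤ 7/8) :
    ∃ m k : ℕ, 1 ≤ m ∧ k ≤ 2 ^ m ∧ gapset m k ⊆ Ioo u v ∧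
      (v - u)^3 / 16 ≤ 2 * rad m := by
  set ℓ := v - u with hℓ
  have hℓ0 : 0 < ℓ := by simp only [hℓ]; linarith
  have hℓ34 : ℓ ≤ 3/4 := by simp only [hℓ]; linarith
  have hex : ∃ n : ℕ, (1/2 : ℝ)^n ≤ ℓ/2 := by
    obtain ⟨n, hn⟩ := exists_pow_lt_of_lt_one (by positivity : (0:ℝ) < ℓ/2)
      (by norm_num : (1/2:ℝ) < 1)
    exact ⟨n, hn.le⟩
  set m := Nat.find hex with hm
  have hmle : (1/2 : ℝ)^m ≤ ℓ/2 := Nat.find_spec hex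
  have hm2 : 2 ≤ m := by
    by_contra hlt
    push_neg at hlt
    interval_cases m <;> norm_num at hmle <;> linarith
  have hmin : ℓ/4 < (1/2 : ℝ)^m := by
    have h1 : ¬ ((1/2 : ℝ)^(m-1) ≤ ℓ/2) := Nat.find_min hex (by omega)
    push_neg at h1
    have h2 : (1/2 : ℝ)^m = (1/2)^(m-1) * (1/2) := by
      rw [← pow_succ]; congr 1; omega
    nlinarith
  clear_value m
  have h2pos : (0:ℝ) < 2 ^ m := by positivity
  have hhalfpow : (1/2 : ℝ)^m = ((2:ℝ)^m)⁻¹ := by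
    rw [one_div, inv_pow]
  have hinvle : ((2:ℝ)^m)⁻¹ ≤ ℓ/2 := by rw [← hhalfpow]; exact hmle
  have hinvgt : ℓ/4 < ((2:ℝ)^m)⁻¹ := by rw [← hhalfpow]; exact hmin
  have hinvpos : (0:ℝ) < ((2:ℝ)^m)⁻¹ := by positivity
  have hrad : rad m = ((2:ℝ)^m)⁻¹ * ((2:ℝ)^m)⁻¹ / 4 := by
    rw [rad, four_pow_eq, mul_inv]
  have hinv14 : ((2:ℝ)^m)⁻¹ ≤ 1/4 := by
    have h4 : (4:ℝ) ≤ 2 ^ m :=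
      calc (4:ℝ) = 2^2 := by norm_num
      _ ≤ 2^m := pow_le_pow_right₀ (by norm_num) hm2
    rw [inv_le_comm₀ h2pos (by norm_num)]; linarith
  have hradsmall : 2 * rad m ≤ ((2:ℝ)^m)⁻¹ / 8 := by
    rw [hrad]; nlinarith
  -- choose k
  set z := (u + rad m) * 2 ^ m with hz
  have hz0 : 0 < z := by
    have := rad_pos m
    have : 0 < u + rad m := by linarith
    positivity
  have hceil_pos : 0 < ⌈z⌉ := Int.ceil_pos.mpr hz0
  set k : ℕ := ⌈z⌉.toNat with hk
  have hkz : (k : ℝ) = (⌈z⌉ : ℤ) := by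
    rw [hk]; exact_mod_cast Int.toNat_of_nonneg hceil_pos.le
  have hk_ge : z ≤ (k:ℝ) := by rw [hkz]; exact Int.le_ceil z
  have hk_lt : (k:ℝ) < z + 1 := by rw [hkz]; exact Int.ceil_lt_add_one z
  clear_value z k
  have hdy_ge : u + rad m ≤ dy m k := by
    rw [dy, le_div_iff₀ h2pos]; linarith [hk_ge, hz.le]
  have hdy_lt : dy m k < u + rad m + ((2:ℝ)^m)⁻¹ := by
    rw [dy, div_lt_iff₀ h2pos]
    have : (u + rad m + ((2:ℝ)^m)⁻¹) * 2^m = z + 1 := by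
      rw [hz]; field_simp
    rw [this]; exact hk_lt
  have hub : dy m k + rad m < v := by
    have h1 : dy m k + rad m < u + 2 * rad m + ((2:ℝ)^m)⁻¹ := by linarith
    have h2 : u + 2 * rad m + ((2:ℝ)^m)⁻¹ ≤ u + (9/8) * ((2:ℝ)^m)⁻¹ := by linarith
    have h3 : u + (9/8) * ((2:ℝ)^m)⁻¹ ≤ u + (9/16) * ℓ := by linarith
    have h4 : u + (9/16) * ℓ < u + ℓ := by linarith
    have h5 : u + ℓ = v := by rw [hℓ]; ring
    linarith
  have hgap_sub : gapset m k ⊆ Ioo u v := by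
    intro t ht
    obtain ⟨ht1, ht2⟩ := ht
    constructor
    · have := rad_pos m; linarith
    · linarith
  have hk_le : k ≤ 2 ^ m := by
    have hdy1 : dy m k < 1 := by
      have : v ≤ 7/8 := hv
      have := rad_pos m
      linarith
    have : (k : ℝ) < 2 ^ m := by
      rw [dy, div_lt_one h2pos] at hdy1; exact hdy1
    exact_mod_cast this.le
  refine ⟨m, k, by omega, hk_le, hgap_sub, ?_⟩
  -- the size bound
  have h2rad : 2 * rad m = ((2:ℝ)^m)⁻¹ * ((2:ℝ)^m)⁻¹ / 2 := by rw [hrad]; ring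
  by_cases hcase : ℓ ≤ 1/2
  · rw [h2rad]
    have hsq : ℓ/4 * (ℓ/4) < ((2:ℝ)^m)⁻¹ * ((2:ℝ)^m)⁻¹ := by nlinarith
    nlinarith [mul_nonneg (mul_self_nonneg ℓ) (by linarith : (0:ℝ) ≤ 1/2 - ℓ)]
  · push_neg at hcase
    have hm_le2 : m ≤ 2 := by
      rw [hm]
      exact Nat.find_le (by norm_num; linarith)
    have hme : m = 2 := le_antisymm hm_le2 hm2
    subst hme
    rw [h2rad]
    norm_num
    nlinarith [pow_le_pow_left₀ hℓ0.le hℓ34 3]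

lemma core_upper {x y : ℝ} (hx : 0 ≤ x) (hxy : x < y) (hy : y ≤ 1) :
    (volume (Cset ∩ Ioc x y)).toReal < 2 * Real.sin ((y - x) / 2) := by
  have hpi : (3:ℝ) < π := Real.pi_gt_three
  have hsin : 0 < Real.sin ((y - x) / 2) :=
    Real.sin_pos_of_pos_of_lt_pi (by linarith) (by linarith)
  set u := max x (1/8 : ℝ) with hu
  set v := min y (7/8 : ℝ) with hv
  have hsub : Cset ∩ Ioc x y ⊆ Icc u v := by
    rintro t ⟨htC, htI⟩
    have h8 : t ∈ Icc (1/8:ℝ) (7/8) := htC.1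
    exact ⟨max_le htI.1.le h8.1, le_min htI.2 h8.2⟩
  by_cases huv : u < v
  · obtain ⟨m, k, hm1, hk, hgsub, hsize⟩ :=
      exists_gap (le_max_right _ _) huv (min_le_right _ _)
    have hgIcc : gapset m k ⊆ Icc u v := hgsub.trans Ioo_subset_Icc_self
    have hrad2 : 2 * rad m ≤ v - u := by
      have hne : dy m k - rad m < dy m k + rad m := by have := rad_pos m; linarith
      have h1 : u ≤ dy m k - rad m ∧ dy m k + rad m ≤ v :=
        (Ioo_subset_Ioo_iff hne).mp hgsub
      linarith [h1.1, h1.2]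
    have hdisj : Cset ∩ Ioc x y ⊆ Icc u v \ gapset m k := by
      rintro t ht
      exact ⟨hsub ht, fun hg => ht.1.2 (gapset_subset_Uset hm1 hk hg)⟩
    have hvol : volume (Icc u v \ gapset m k) = ENNReal.ofReal ((v - u) - 2 * rad m) := by
      rw [measure_diff hgIcc measurableSet_Ioo.nullMeasurableSet
          (by rw [volume_gapset]; exact ENNReal.ofReal_ne_top),
        volume_gapset, Real.volume_Icc,
        ← ENNReal.ofReal_sub _ (by linarith [rad_pos m])]
    have hle : volume (Cset ∩ Ioc x y) ≤ ENNReal.ofReal ((v - u) - 2 * rad m) := by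
      rw [← hvol]; exact measure_mono hdisj
    have htr : (volume (Cset ∩ Ioc x y)).toReal ≤ (v - u) - 2 * rad m :=
      ENNReal.toReal_le_of_le_ofReal (by linarith) hle
    -- chain of real inequalities
    set ℓ := v - u with hℓ
    have hℓ0 : 0 < ℓ := by simp only [hℓ]; linarith
    have hℓ34 : ℓ ≤ 3/4 := by
      have h1 : 1/8 ≤ u := le_max_right _ _
      have h2 : v ≤ 7/8 := min_le_right _ _
      simp only [hℓ]; linarith
    have hcube : ℓ - ℓ^3/16 < 2 * Real.sin (ℓ/2) := by
      have h := Real.sin_gt_sub_cube (by linarith : (0:ℝ) < ℓ/2)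
      nlinarith [h, pow_pos hℓ0 3]
    have hmono : Real.sin (ℓ/2) ≤ Real.sin ((y - x)/2) := by
      have hle2 : ℓ ≤ y - x := by
        have h1 : x ≤ u := le_max_left _ _
        have h2 : v ≤ y := min_le_left _ _
        simp only [hℓ]; linarith
      refine Real.strictMonoOn_sin.monotoneOn ⟨by linarith, by linarith⟩
        ⟨by linarith, by linarith⟩ (by linarith)
    linarith
  · push_neg at huv
    have h0 : volume (Cset ∩ Ioc x y) = 0 := by
      refine le_antisymm ?_ zero_le
      refine le_trans (measure_mono hsub) ?_
      rw [Real.volume_Icc]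
      simp [ENNReal.ofReal_eq_zero.mpr (by linarith : v - u ≤ 0)]
    rw [h0]
    simpa using hsin

-- distance of dyadics from 1/3
lemma dyadic_third (m k : ℕ) : (3 * 2^m : ℝ)⁻¹ ≤ |dy m k - 1/3| := by
  have h2pos : (0:ℝ) < 2 ^ m := by positivity
  have hne : (3 * k : ℤ) ≠ 2 ^ m := by
    intro he
    have hdvd : (3 : ℕ) ∣ 2 ^ m := by
      have : (3 : ℤ) ∣ 2 ^ m := ⟨k, by omega⟩
      exact_mod_cast this
    have hcop : Nat.Coprime 3 (2 ^ m) := Nat.Coprime.pow_right m (by norm_num)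
    have h3 : (3:ℕ) = 1 := Nat.Coprime.eq_one_of_dvd hcop hdvd
    omega
  have habs : (1 : ℤ) ≤ |3 * (k:ℤ) - 2 ^ m| :=
    Int.one_le_abs (sub_ne_zero.mpr hne)
  have habsR : (1 : ℝ) ≤ |3 * (k:ℝ) - 2 ^ m| := by exact_mod_cast habs
  have heq : dy m k - 1/3 = (3 * k - 2 ^ m) / (3 * 2 ^ m) := by
    rw [dy]; field_simp
  rw [heq, abs_div, abs_of_pos (by positivity : (0:ℝ) < 3 * 2 ^ m)]
  rw [le_div_iff₀ (by positivity : (0:ℝ) < 3 * 2 ^ m)]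
  calc (3 * 2 ^ m : ℝ)⁻¹ * (3 * 2 ^ m) = 1 := by field_simp
  _ ≤ |3 * (k:ℝ) - 2 ^ m| := by push_cast at habsR ⊢; linarith [habsR]

lemma low_level_empty {m : ℕ} (hm : 1 ≤ m) {h : ℝ} (h0 : 0 < h)
    (hlev : 3 * h ≤ ((2:ℝ)^m)⁻¹) (k : ℕ) :
    gapset m k ∩ Ioc (1/3 - h/2) (1/3 + h/2) = ∅ := by
  ext t
  simp only [mem_inter_iff, mem_Ioc, gapset, mem_Ioo, mem_empty_iff_false, iff_false]
  rintro ⟨⟨h1, h2⟩, h3, h4⟩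
  have h2pos : (0:ℝ) < 2 ^ m := by positivity
  have hinv : (0:ℝ) < ((2:ℝ)^m)⁻¹ := by positivity
  have hd := dyadic_third m k
  have hrad : rad m = ((2:ℝ)^m)⁻¹ * ((2:ℝ)^m)⁻¹ / 4 := by rw [rad, four_pow_eq, mul_inv]
  have hinvle : ((2:ℝ)^m)⁻¹ ≤ 1/2 := by
    have : (2:ℝ) ≤ 2 ^ m := by
      calc (2:ℝ) = 2^1 := by norm_num
      _ ≤ 2^m := pow_le_pow_right₀ (by norm_num) hm
    rw [inv_le_comm₀ h2pos (by norm_num)]; linarith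
  have hd2 : |dy m k - 1/3| ≤ |dy m k - t| + |t - 1/3| := by
    have : dy m k - 1/3 = (dy m k - t) + (t - 1/3) := by ring
    rw [this]; exact abs_add_le _ _
  have ha1 : |dy m k - t| < rad m := by rw [abs_lt]; constructor <;> linarith
  have ha2 : |t - 1/3| ≤ h/2 := by rw [abs_le]; constructor <;> linarith
  have htrib : (3 * 2^m : ℝ)⁻¹ < rad m + h/2 := by
    calc (3 * 2^m : ℝ)⁻¹ ≤ |dy m k - 1/3| := hd
    _ ≤ |dy m k - t| + |t - 1/3| := hd2
    _ < rad m + h/2 := by linarith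
  have hp : (3 * 2^m : ℝ)⁻¹ = ((2:ℝ)^m)⁻¹ / 3 := by rw [mul_inv]; ring
  rw [hp, hrad] at htrib
  -- inv/3 < inv*inv/4 + h/2 ≤ inv*inv/4 + inv/6  ⇒ inv/6 < inv*inv/4 ⇒ 2/3 < inv ≤ 1/2 contra
  have hh : h/2 ≤ ((2:ℝ)^m)⁻¹/6 := by linarith
  nlinarith

lemma level_inter_le (m : ℕ) {a b : ℝ} (hab : a ≤ b) :
    volume ((⋃ (k : ℕ) (_ : k ≤ 2 ^ m), gapset m k) ∩ Ioc a b)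
      ≤ ENNReal.ofReal (((b - a) * 2^m + 2) * (2 * rad m)) := by
  have h2pos : (0:ℝ) < 2 ^ m := by positivity
  have hradp := rad_pos m
  set k0 : ℤ := ⌈(a - rad m) * 2^m⌉ with hk0def
  set k1 : ℤ := ⌊(b + rad m) * 2^m⌋ with hk1def
  have hsub : (⋃ (k : ℕ) (_ : k ≤ 2 ^ m), gapset m k) ∩ Ioc a b ⊆
      ⋃ j ∈ Finset.Icc k0 k1, gapset m j.toNat := by
    rintro t ⟨htU, hta, htb⟩
    simp only [mem_iUnion] at htU
    obtain ⟨k, hk, htg⟩ := htU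
    obtain ⟨hg1, hg2⟩ := htg
    have hdy_lb : a - rad m < dy m k := by linarith
    have hdy_ub : dy m k < b + rad m := by linarith
    have hk0 : k0 ≤ (k:ℤ) := by
      rw [hk0def, Int.ceil_le]
      push_cast
      rw [dy] at hdy_lb
      calc (a - rad m) * 2^m ≤ dy m k * 2^m := by
            rw [dy]; exact mul_le_mul_of_nonneg_right (by rw [← dy]; exact hdy_lb.le) h2pos.le
      _ = k := by rw [dy]; field_simp
    have hk1 : (k:ℤ) ≤ k1 := by
      rw [hk1def, Int.le_floor]
      push_cast
      calc (k:ℝ) = dy m k * 2^m := by rw [dy]; field_simp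
      _ ≤ (b + rad m) * 2^m := mul_le_mul_of_nonneg_right hdy_ub.le h2pos.le
    refine mem_biUnion (Finset.mem_Icc.mpr ⟨hk0, hk1⟩) ?_
    rw [Int.toNat_natCast]
    exact ⟨hg1, hg2⟩
  refine (measure_mono hsub).trans ((measure_biUnion_finset_le _ _).trans ?_)
  have hcard : ((Finset.Icc k0 k1).card : ℝ) ≤ (b - a) * 2^m + 2 := by
    rw [Int.card_Icc]
    have hr1 : ((k1:ℝ)) ≤ (b + rad m) * 2^m := Int.floor_le _
    have hr0 : (a - rad m) * 2^m ≤ (k0:ℝ) := Int.le_ceil _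
    have hrad2m : (2 * rad m) * 2^m ≤ 1 := by
      rw [rad, four_pow_eq, mul_inv]
      have hi : ((2:ℝ)^m)⁻¹ ≤ 1 := by
        rw [inv_le_one_iff₀]; right; exact one_le_pow₀ (by norm_num)
      have hip : (0:ℝ) < ((2:ℝ)^m)⁻¹ := by positivity
      calc 2 * (((2^m:ℝ))⁻¹ * ((2:ℝ)^m)⁻¹ / 4) * 2^m
          = ((2:ℝ)^m)⁻¹ / 2 := by field_simp; ring
      _ ≤ 1 := by linarith
    by_cases hc : k1 + 1 - k0 ≤ 0
    · rw [Int.toNat_of_nonpos hc]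
      simp only [Nat.cast_zero]
      nlinarith
    · push_neg at hc
      have hz : ((k1 + 1 - k0).toNat : ℤ) = k1 + 1 - k0 := Int.toNat_of_nonneg (by omega)
      have : ((k1 + 1 - k0).toNat : ℝ) = ((k1:ℝ) + 1 - k0) := by
        exact_mod_cast congrArg (Int.cast : ℤ → ℝ) hz
      rw [this]
      nlinarith
  calc ∑ j ∈ Finset.Icc k0 k1, volume (gapset m j.toNat)
      = (Finset.Icc k0 k1).card * ENNReal.ofReal (2 * rad m) := by
        simp [volume_gapset, Finset.sum_const, nsmul_eq_mul]
    _ ≤ ENNReal.ofReal (((b - a) * 2^m + 2) * (2 * rad m)) := by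
        rw [← ENNReal.ofReal_natCast, ← ENNReal.ofReal_mul (by positivity)]
        apply ENNReal.ofReal_le_ofReal
        exact mul_le_mul_of_nonneg_right hcard (by linarith)

lemma Uset_inter_le {h : ℝ} (h0 : 0 < h) (hsmall : h ≤ 1/8) :
    volume (Uset ∩ Ioc (1/3 - h/2) (1/3 + h/2)) ≤ ENNReal.ofReal (15 * h^2) := by
  set a := 1/3 - h/2 with hadef
  set b := 1/3 + h/2 with hbdef
  have hab : a ≤ b := by rw [hadef, hbdef]; linarith
  have hex : ∃ n : ℕ, (1/2:ℝ)^n < 3 * h := by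
    obtain ⟨n, hn⟩ := exists_pow_lt_of_lt_one (by linarith : (0:ℝ) < 3*h)
      (by norm_num : (1/2:ℝ) < 1)
    exact ⟨n, hn⟩
  set m0 := Nat.find hex with hm0
  have hm0spec : (1/2:ℝ)^m0 < 3 * h := Nat.find_spec hex
  have hm0pos : 1 ≤ m0 := by
    rcases Nat.eq_zero_or_pos m0 with h' | h'
    · exfalso; rw [h'] at hm0spec; norm_num at hm0spec; linarith
    · exact h'
  have hmin : ∀ n < m0, 3 * h ≤ (1/2:ℝ)^n := by
    intro n hn
    have := Nat.find_min hex hn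
    push_neg at this
    exact this
  have hhalfinv : ∀ n : ℕ, (1/2:ℝ)^n = ((2:ℝ)^n)⁻¹ := fun n => by
    rw [one_div, inv_pow]
  -- inclusion into tail levels
  have hsub : Uset ∩ Ioc a b ⊆
      ⋃ j : ℕ, ((⋃ (k : ℕ) (_ : k ≤ 2 ^ (m0 + j)), gapset (m0 + j) k) ∩ Ioc a b) := by
    rintro t ⟨htU, htI⟩
    rw [Uset] at htU
    simp only [mem_iUnion] at htU
    obtain ⟨m, k, hk, htg⟩ := htU
    have hge : m0 ≤ m + 1 := by
      by_contra hlt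
      push_neg at hlt
      have hlev : 3 * h ≤ ((2:ℝ)^(m+1))⁻¹ := by
        rw [← hhalfinv]; exact hmin _ hlt
      have := low_level_empty (Nat.le_add_left 1 m) h0 hlev k
      rw [hadef, hbdef] at htI
      exact absurd (mem_inter htg htI) (by rw [this]; exact notMem_empty t)
    refine mem_iUnion.mpr ⟨m + 1 - m0, ?_⟩
    have harith : m0 + (m + 1 - m0) = m + 1 := by omega
    rw [harith]
    exact ⟨mem_iUnion.mpr ⟨k, mem_iUnion.mpr ⟨hk, htg⟩⟩, htI⟩
  refine (measure_mono hsub).trans ((measure_iUnion_le _).trans ?_)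
  -- per level bound
  have hba : b - a = h := by rw [hadef, hbdef]; ring
  have hperlvl : ∀ j : ℕ,
      volume ((⋃ (k : ℕ) (_ : k ≤ 2 ^ (m0 + j)), gapset (m0 + j) k) ∩ Ioc a b)
        ≤ ENNReal.ofReal ((h/2) * ((2:ℝ)^m0)⁻¹ * (1/2)^j + ((4:ℝ)^m0)⁻¹ * (1/4)^j) := by
    intro j
    refine (level_inter_le (m0 + j) hab).trans (ENNReal.ofReal_le_ofReal (le_of_eq ?_))
    rw [hba, rad, four_pow_eq, pow_add ((2:ℝ)) m0 j]
    have e1 : ((1:ℝ)/2)^j = ((2:ℝ)^j)⁻¹ := by rw [one_div, inv_pow]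
    have e2 : ((1:ℝ)/4)^j = ((4:ℝ)^j)⁻¹ := by rw [one_div, inv_pow]
    rw [e1, e2, four_pow_eq m0, four_pow_eq j]
    have h2m : (0:ℝ) < (2:ℝ)^m0 := by positivity
    have h2j : (0:ℝ) < (2:ℝ)^j := by positivity
    field_simp
    ring
  refine (ENNReal.tsum_le_tsum hperlvl).trans ?_
  have hs2 : Summable (fun j : ℕ => (h/2) * ((2:ℝ)^m0)⁻¹ * (1/2)^j) :=
    (summable_geometric_of_lt_one (by norm_num) (by norm_num)).mul_left _
  have hs4 : Summable (fun j : ℕ => ((4:ℝ)^m0)⁻¹ * (1/4)^j) :=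
    (summable_geometric_of_lt_one (by norm_num) (by norm_num)).mul_left _
  rw [← ENNReal.ofReal_tsum_of_nonneg (fun j => by positivity) (hs2.add hs4)]
  apply ENNReal.ofReal_le_ofReal
  rw [Summable.tsum_add hs2 hs4, tsum_mul_left, tsum_mul_left,
    tsum_geometric_of_lt_one (by norm_num) (by norm_num),
    tsum_geometric_of_lt_one (by norm_num) (by norm_num)]
  norm_num
  have hi : ((2:ℝ)^m0)⁻¹ < 3 * h := by rw [← hhalfinv]; exact hm0spec
  have hip : (0:ℝ) < ((2:ℝ)^m0)⁻¹ := by positivity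
  have h4e : ((4:ℝ)^m0)⁻¹ = ((2:ℝ)^m0)⁻¹ * ((2:ℝ)^m0)⁻¹ := by
    rw [four_pow_eq, mul_inv]
  rw [h4e]
  nlinarith

lemma core_lower {h : ℝ} (h0 : 0 < h) (hsmall : h ≤ 1/8) :
    h - 15 * h^2 ≤ (volume (Cset ∩ Ioc (1/3 - h/2) (1/3 + h/2))).toReal := by
  set a := 1/3 - h/2 with hadef
  set b := 1/3 + h/2 with hbdef
  by_cases hpos : 0 ≤ h - 15 * h^2
  · have hIsub : Ioc a b ⊆ (Cset ∩ Ioc a b) ∪ (Uset ∩ Ioc a b) := by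
      intro t ht
      by_cases htU : t ∈ Uset
      · exact Or.inr ⟨htU, ht⟩
      · refine Or.inl ⟨⟨⟨?_, ?_⟩, htU⟩, ht⟩
        · have := ht.1; rw [hadef] at this; linarith
        · have := ht.2; rw [hbdef] at this; linarith
    have h1 : ENNReal.ofReal h ≤ volume (Cset ∩ Ioc a b) + ENNReal.ofReal (15 * h^2) := by
      have : ENNReal.ofReal h = volume (Ioc a b) := by
        rw [Real.volume_Ioc]; congr 1; rw [hadef, hbdef]; ring
      rw [this]
      refine (measure_mono hIsub).trans ?_
      refine (measure_union_le _ _).trans ?_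
      exact add_le_add_right (Uset_inter_le h0 hsmall) _
    have h2 : ENNReal.ofReal h = ENNReal.ofReal (h - 15*h^2) + ENNReal.ofReal (15*h^2) := by
      rw [← ENNReal.ofReal_add hpos (by positivity)]; ring_nf
    rw [h2] at h1
    have h3 : ENNReal.ofReal (h - 15*h^2) ≤ volume (Cset ∩ Ioc a b) :=
      (ENNReal.add_le_add_iff_right ENNReal.ofReal_ne_top).mp h1
    have hfin : volume (Cset ∩ Ioc a b) ≠ ⊤ := by
      refine ne_top_of_le_ne_top ?_ (measure_mono inter_subset_right)
      rw [Real.volume_Ioc]; exact ENNReal.ofReal_ne_top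
    exact (ENNReal.ofReal_le_iff_le_toReal hfin).mp h3
  · push_neg at hpos
    exact hpos.le.trans ENNReal.toReal_nonneg

lemma measurableSet_Cset : MeasurableSet Cset :=
  isCompact_Cset.isClosed.measurableSet

lemma intInt (u v : ℝ) :
    IntervalIntegrable (Cset.indicator fun _ => (1:ℝ)) volume u v := by
  rw [intervalIntegrable_iff]
  refine (integrable_indicator_iff measurableSet_Cset).mpr ?_
  refine (integrableOn_const_iff (C := (1:ℝ))).mpr (Or.inr ?_)
  rw [Measure.restrict_apply measurableSet_Cset]
  refine lt_of_le_of_lt (measure_mono inter_subset_right) ?_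
  exact measure_Ioc_lt_top

lemma F_diff {x y : ℝ} (hxy : x ≤ y) :
    (∫ t in (0:ℝ)..y, Cset.indicator (fun _ => (1:ℝ)) t) -
      (∫ t in (0:ℝ)..x, Cset.indicator (fun _ => (1:ℝ)) t)
      = (volume (Cset ∩ Ioc x y)).toReal := by
  have hadd := intervalIntegral.integral_add_adjacent_intervals (intInt 0 x) (intInt x y)
  have h1 : (∫ t in (0:ℝ)..y, Cset.indicator (fun _ => (1:ℝ)) t) -
      (∫ t in (0:ℝ)..x, Cset.indicator (fun _ => (1:ℝ)) t)
      = ∫ t in x..y, Cset.indicator (fun _ => (1:ℝ)) t := by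
    rw [← hadd]; ring
  rw [h1, intervalIntegral.integral_of_le hxy,
    setIntegral_indicator measurableSet_Cset]
  rw [setIntegral_const, smul_eq_mul, mul_one, inter_comm]
  rfl

lemma d_eq {t : ℝ} (h0 : 0 < t) (h1 : t ≤ 1) :
    Real.sqrt (2*(1 - Real.cos t)) = 2 * Real.sin (t/2) := by
  have hpi : (3:ℝ) < π := Real.pi_gt_three
  have hs : 0 ≤ Real.sin (t/2) :=
    Real.sin_nonneg_of_nonneg_of_le_pi (by linarith) (by linarith)
  have hsq : 2*(1 - Real.cos t) = (2 * Real.sin (t/2))^2 := by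
    have h := Real.sin_sq_eq_half_sub (t/2)
    have h2 : 2 * (t/2) = t := by ring
    rw [h2] at h
    nlinarith [h]
  rw [hsq, Real.sqrt_sq (by linarith)]

lemma sin_half_pos {t : ℝ} (h0 : 0 < t) (h1 : t ≤ 1) : 0 < Real.sin (t/2) :=
  Real.sin_pos_of_pos_of_lt_pi (by linarith) (by linarith [Real.pi_gt_three])

lemma part_i : ∀ x ∈ Set.Icc (0 : ℝ) 1, ∀ y ∈ Set.Icc (0 : ℝ) 1, x ≠ y →
    |(∫ t in (0 : ℝ)..x, Cset.indicator (fun _ => (1 : ℝ)) t) -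
        (∫ t in (0 : ℝ)..y, Cset.indicator (fun _ => (1 : ℝ)) t)| <
      Real.sqrt (2 * (1 - Real.cos (x - y))) := by
  intro x hx y hy hne
  rcases lt_or_gt_of_ne hne with hlt | hlt
  · have hd := F_diff hlt.le
    have h1 : (∫ t in (0:ℝ)..x, Cset.indicator (fun _ => (1:ℝ)) t) -
        (∫ t in (0:ℝ)..y, Cset.indicator (fun _ => (1:ℝ)) t)
        = -((volume (Cset ∩ Ioc x y)).toReal) := by linarith
    rw [h1, abs_neg, abs_of_nonneg ENNReal.toReal_nonneg]
    have hc : x - y = -(y - x) := by ring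
    rw [hc, Real.cos_neg, d_eq (by linarith) (by linarith [hx.1, hy.2])]
    exact core_upper hx.1 hlt hy.2
  · have hd := F_diff hlt.le
    rw [hd, abs_of_nonneg ENNReal.toReal_nonneg,
      d_eq (by linarith) (by linarith [hy.1, hx.2])]
    exact core_upper hy.1 hlt hx.2

lemma sqrt_d_pos {x y : ℝ} (hx : x ∈ Set.Icc (0:ℝ) 1) (hy : y ∈ Set.Icc (0:ℝ) 1)
    (hne : x ≠ y) : 0 < Real.sqrt (2 * (1 - Real.cos (x - y))) := by
  rcases lt_or_gt_of_ne hne with hlt | hlt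
  · have hc : x - y = -(y - x) := by ring
    rw [hc, Real.cos_neg, d_eq (by linarith) (by linarith [hx.1, hy.2])]
    have := sin_half_pos (by linarith : (0:ℝ) < y - x) (by linarith [hx.1, hy.2])
    linarith
  · rw [d_eq (by linarith) (by linarith [hy.1, hx.2])]
    have := sin_half_pos (by linarith : (0:ℝ) < x - y) (by linarith [hy.1, hx.2])
    linarith

/-- There exists a compact set `C ⊆ (0,1)` of positive Lebesgue measure such that
`f x = ∫₀ˣ 1_C` satisfies `|f x - f y| < d x y` for all `x ≠ y` in `[0,1]`, yet the
supremum of the ratios `|f x - f y| / d x y` equals `1`, where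
`d x y = √(2(1 - cos(x - y)))` is the circle metric on `[0,1]`. -/
theorem stmt_0 :
    ∃ C : Set ℝ, IsCompact C ∧ C ⊆ Set.Ioo (0 : ℝ) 1 ∧ 0 < volume C ∧
      (∀ x ∈ Set.Icc (0 : ℝ) 1, ∀ y ∈ Set.Icc (0 : ℝ) 1, x ≠ y →
        |(∫ t in (0 : ℝ)..x, C.indicator (fun _ => (1 : ℝ)) t) -
            (∫ t in (0 : ℝ)..y, C.indicator (fun _ => (1 : ℝ)) t)| <
          Real.sqrt (2 * (1 - Real.cos (x - y)))) ∧
      IsLUB {r : ℝ | ∃ x ∈ Set.Icc (0 : ℝ) 1, ∃ y ∈ Set.Icc (0 : ℝ) 1, x ≠ y ∧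
          r = |(∫ t in (0 : ℝ)..x, C.indicator (fun _ => (1 : ℝ)) t) -
                (∫ t in (0 : ℝ)..y, C.indicator (fun _ => (1 : ℝ)) t)| /
              Real.sqrt (2 * (1 - Real.cos (x - y)))} 1 := by
  refine ⟨Cset, isCompact_Cset, Cset_subset, volume_Cset_pos, part_i, ?_, ?_⟩
  · -- upper bound
    rintro r ⟨x, hx, y, hy, hne, rfl⟩
    have hlt := part_i x hx y hy hne
    have hpos := sqrt_d_pos hx hy hne
    have : |(∫ t in (0:ℝ)..x, Cset.indicator (fun _ => (1:ℝ)) t) -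
        (∫ t in (0:ℝ)..y, Cset.indicator (fun _ => (1:ℝ)) t)| /
        Real.sqrt (2 * (1 - Real.cos (x - y))) < 1 := (div_lt_one hpos).mpr hlt
    linarith
  · -- least upper bound
    intro bb hbb
    by_contra hb1
    push_neg at hb1
    set h := min (1/16 : ℝ) ((1 - bb)/15) with hhdef
    have hh0 : 0 < h := lt_min (by norm_num) (by linarith)
    have hh16 : h ≤ 1/16 := min_le_left _ _
    have hh8 : h ≤ 1/8 := by linarith
    have hhb : 15 * h ≤ 1 - bb := by
      have := min_le_right (1/16 : ℝ) ((1 - bb)/15); linarith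
    set x := 1/3 - h/2 with hxdef
    set y := 1/3 + h/2 with hydef
    have hxy : x < y := by rw [hxdef, hydef]; linarith
    have hxI : x ∈ Set.Icc (0:ℝ) 1 := by
      constructor <;> rw [hxdef] <;> [linarith; linarith]
    have hyI : y ∈ Set.Icc (0:ℝ) 1 := by
      constructor <;> rw [hydef] <;> [linarith; linarith]
    have hmem : (|(∫ t in (0:ℝ)..x, Cset.indicator (fun _ => (1:ℝ)) t) -
          (∫ t in (0:ℝ)..y, Cset.indicator (fun _ => (1:ℝ)) t)| /
          Real.sqrt (2 * (1 - Real.cos (x - y)))) ∈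
        {r : ℝ | ∃ x ∈ Set.Icc (0 : ℝ) 1, ∃ y ∈ Set.Icc (0 : ℝ) 1, x ≠ y ∧
          r = |(∫ t in (0 : ℝ)..x, Cset.indicator (fun _ => (1 : ℝ)) t) -
                (∫ t in (0 : ℝ)..y, Cset.indicator (fun _ => (1 : ℝ)) t)| /
              Real.sqrt (2 * (1 - Real.cos (x - y)))} :=
      ⟨x, hxI, y, hyI, ne_of_lt hxy, rfl⟩
    have hrle := hbb hmem
    -- compute the value
    have hyx : y - x = h := by rw [hxdef, hydef]; ring
    have habs : |(∫ t in (0:ℝ)..x, Cset.indicator (fun _ => (1:ℝ)) t) -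
        (∫ t in (0:ℝ)..y, Cset.indicator (fun _ => (1:ℝ)) t)|
        = (volume (Cset ∩ Ioc x y)).toReal := by
      have hd := F_diff hxy.le
      have h1 : (∫ t in (0:ℝ)..x, Cset.indicator (fun _ => (1:ℝ)) t) -
          (∫ t in (0:ℝ)..y, Cset.indicator (fun _ => (1:ℝ)) t)
          = -((volume (Cset ∩ Ioc x y)).toReal) := by linarith
      rw [h1, abs_neg, abs_of_nonneg ENNReal.toReal_nonneg]
    have hsqrt : Real.sqrt (2 * (1 - Real.cos (x - y))) = 2 * Real.sin (h/2) := by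
      have hc : x - y = -h := by rw [hxdef, hydef]; ring
      rw [hc, Real.cos_neg, d_eq hh0 (by linarith)]
    rw [habs, hsqrt] at hrle
    -- lower bounds
    have hvol : h - 15*h^2 ≤ (volume (Cset ∩ Ioc x y)).toReal := by
      have := core_lower hh0 hh8
      rw [hxdef, hydef]
      exact this
    have hs0 : 0 < Real.sin (h/2) := sin_half_pos hh0 (by linarith)
    have hsh : 2 * Real.sin (h/2) < h := by
      have := Real.sin_lt (by linarith : (0:ℝ) < h/2)
      linarith
    have hnum : 0 < h - 15*h^2 := by nlinarith
    have hstep1 : (h - 15*h^2) / h < (h - 15*h^2) / (2 * Real.sin (h/2)) :=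
      div_lt_div_of_pos_left hnum (by linarith) hsh
    have hstep2 : (h - 15*h^2) / (2 * Real.sin (h/2)) ≤
        (volume (Cset ∩ Ioc x y)).toReal / (2 * Real.sin (h/2)) :=
      div_le_div_of_nonneg_right hvol (by linarith)
    have heq : (h - 15*h^2)/h = 1 - 15*h := by field_simp
    have : bb < (volume (Cset ∩ Ioc x y)).toReal / (2 * Real.sin (h/2)) := by
      rw [heq] at hstep1
      linarith
    linarith
end

section
/- The unit circle 𝕋 is Gromov concave: for every pair of distinct points x, y ∈ 𝕋 there exists ε > 0 such that (x,y)_z ≥ ε·min{d(x,z), d(y,z)} for every z ∈ 𝕋 \ {x,y}. Equivalently, every pair of distinct points of 𝕋 fails property (Z). -/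
open Real

-- distance on circle
lemma dist_exp_exp (s t : ℝ) :
    dist (Complex.exp (s * Complex.I)) (Complex.exp (t * Complex.I))
      = 2 * |Real.sin ((s - t) / 2)| := by
  rw [Complex.dist_eq]
  have h : Complex.exp (s * Complex.I) - Complex.exp (t * Complex.I)
      = Complex.exp (((s + t)/2 : ℝ) * Complex.I) *
        (Complex.exp (((s - t)/2 : ℝ) * Complex.I) - Complex.exp ((-((s - t)/2) : ℝ) * Complex.I)) := by
    rw [mul_sub, ← Complex.exp_add, ← Complex.exp_add]
    push_cast
    ring_nf
  rw [h, norm_mul, Complex.norm_exp_ofReal_mul_I, one_mul]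
  rw [Complex.exp_mul_I, Complex.exp_mul_I]
  push_cast
  simp [Complex.cos_ofReal_re, Real.cos_neg, Real.sin_neg]
  have : (Complex.sin ((↑s - ↑t) / 2) * Complex.I + Complex.sin ((↑s - ↑t) / 2) * Complex.I)
      = 2 * (Complex.sin (((s - t)/2 : ℝ))) * Complex.I := by push_cast; ring
  rw [this, norm_mul, norm_mul, Complex.norm_I, mul_one, ← Complex.ofReal_sin,
    Complex.norm_real, Real.norm_eq_abs, Complex.norm_two]


noncomputable def epsC (C : ℝ) : ℝ := (Real.sin (C/4) * Real.sin ((π - C)/4))^2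

lemma ident1 (a c : ℝ) :
    Real.sin (2*a) + Real.sin (2*a + 2*c) - Real.sin (2*c)
      = 4 * Real.sin a * Real.cos (a + c) * Real.cos c := by
  have h1 := Real.sin_sq_add_cos_sq a
  have h2 := Real.sin_sq_add_cos_sq c
  simp only [Real.sin_add, Real.cos_add, Real.sin_two_mul, Real.cos_two_mul,
    two_mul, Real.sin_add, Real.cos_add]
  linear_combination (-2 * Real.sin a * Real.cos a) * h2 + (2 * Real.sin c * Real.cos c) * h1

lemma ident2 (a c : ℝ) :
    Real.sin (2*a) - Real.sin (2*a + 2*c) - Real.sin (2*c)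
      = -(4 * Real.sin c * Real.cos a * Real.cos (a + c)) := by
  have h1 := Real.sin_sq_add_cos_sq a
  have h2 := Real.sin_sq_add_cos_sq c
  simp only [Real.sin_add, Real.cos_add, Real.sin_two_mul, Real.cos_two_mul,
    two_mul, Real.sin_add, Real.cos_add]
  linear_combination (2 * Real.sin c * Real.cos c) * h1 - (2 * Real.sin a * Real.cos a) * h2

lemma eps_le1 {C : ℝ} (hC0 : 0 < C) (hCπ : C < π) :
    epsC C ≤ Real.sin ((π - C)/4) * Real.cos (C/2) := by
  have hq0 : 0 < (π - C)/4 := by linarith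
  have hq2 : (π - C)/4 ≤ π/2 := by nlinarith [Real.pi_pos]
  have h1 : 0 < Real.sin ((π - C)/4) := Real.sin_pos_of_pos_of_lt_pi hq0 (by nlinarith [Real.pi_pos])
  have h2 : Real.sin ((π - C)/4) ≤ Real.sin ((π - C)/2) :=
    Real.sin_le_sin_of_le_of_le_pi_div_two (by linarith) (by linarith) (by linarith)
  have h3 : Real.sin ((π - C)/2) = Real.cos (C/2) := by
    rw [show (π - C)/2 = π/2 - C/2 by ring, Real.sin_pi_div_two_sub]
  have h4 : Real.sin (C/4) ≤ 1 := Real.sin_le_one _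
  have h5 : 0 < Real.sin (C/4) := Real.sin_pos_of_pos_of_lt_pi (by linarith) (by nlinarith [Real.pi_pos])
  unfold epsC
  have e1 : (Real.sin (C/4) * Real.sin ((π - C)/4))^2 ≤ Real.sin ((π - C)/4)^2 := by
    calc (Real.sin (C/4) * Real.sin ((π - C)/4))^2
        = Real.sin (C/4)^2 * Real.sin ((π - C)/4)^2 := by ring
      _ ≤ Real.sin ((π - C)/4)^2 :=
        mul_le_of_le_one_left (sq_nonneg _) (Real.sin_sq_le_one _)
  have e2 : Real.sin ((π - C)/4)^2 ≤ Real.sin ((π - C)/4) * Real.cos (C/2) := by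
    nlinarith [mul_le_mul_of_nonneg_left h2 h1.le]
  linarith

lemma eps_le2 {C : ℝ} (hC0 : 0 < C) (hCπ : C < π) :
    epsC C ≤ Real.sin (C/4) * Real.sin (C/2) := by
  have h1 : 0 < Real.sin (C/4) := Real.sin_pos_of_pos_of_lt_pi (by linarith) (by nlinarith [Real.pi_pos])
  have h2 : Real.sin (C/4) ≤ Real.sin (C/2) :=
    Real.sin_le_sin_of_le_of_le_pi_div_two (by linarith) (by linarith) (by linarith)
  have h4 : Real.sin ((π - C)/4) ≤ 1 := Real.sin_le_one _
  have h5 : 0 < Real.sin ((π - C)/4) :=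
    Real.sin_pos_of_pos_of_lt_pi (by linarith) (by nlinarith [Real.pi_pos])
  unfold epsC
  have e1 : (Real.sin (C/4) * Real.sin ((π - C)/4))^2 ≤ Real.sin (C/4)^2 := by
    calc (Real.sin (C/4) * Real.sin ((π - C)/4))^2
        = Real.sin ((π - C)/4)^2 * Real.sin (C/4)^2 := by ring
      _ ≤ Real.sin (C/4)^2 :=
        mul_le_of_le_one_left (sq_nonneg _) (Real.sin_sq_le_one _)
  have e2 : Real.sin (C/4)^2 ≤ Real.sin (C/4) * Real.sin (C/2) := by
    nlinarith [mul_le_mul_of_nonneg_left h2 h1.le]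
  linarith

set_option maxHeartbeats 1600000 in
lemma core (A C : ℝ) (hA0 : 0 < A) (hAπ : A < π) (hC0 : 0 < C) (hCπ : C < π)
    (hne : A + C ≠ π) :
    2 * epsC C * min |Real.sin A| |Real.sin (A + C)| ≤
      |Real.sin A| + |Real.sin (A + C)| - Real.sin C := by
  have pi_pos := Real.pi_pos
  have hsA : 0 < Real.sin A := Real.sin_pos_of_pos_of_lt_pi hA0 hAπ
  have hsC : 0 < Real.sin C := Real.sin_pos_of_pos_of_lt_pi hC0 hCπ
  have hsA2 : 0 < Real.sin (A/2) := Real.sin_pos_of_pos_of_lt_pi (by linarith) (by linarith)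
  have hcA2 : 0 < Real.cos (A/2) :=
    Real.cos_pos_of_mem_Ioo ⟨by linarith, by linarith⟩
  have hcC2 : 0 < Real.cos (C/2) :=
    Real.cos_pos_of_mem_Ioo ⟨by linarith, by linarith⟩
  have hsC2 : 0 < Real.sin (C/2) := Real.sin_pos_of_pos_of_lt_pi (by linarith) (by linarith)
  have hAeq : Real.sin A = 2 * Real.sin (A/2) * Real.cos (A/2) := by
    have := Real.sin_two_mul (A/2)
    rwa [show 2 * (A/2) = A by ring] at this
  have habsA : |Real.sin A| = Real.sin A := abs_of_pos hsA
  have heps : 0 ≤ epsC C := sq_nonneg _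
  rcases lt_or_gt_of_ne hne with hlt | hgt
  · -- Case A + C < π
    have hsAC : 0 < Real.sin (A + C) := Real.sin_pos_of_pos_of_lt_pi (by linarith) hlt
    have habsAC : |Real.sin (A + C)| = Real.sin (A + C) := abs_of_pos hsAC
    have hcAC2 : 0 < Real.cos ((A + C)/2) :=
      Real.cos_pos_of_mem_Ioo ⟨by linarith, by linarith⟩
    have hsAC2 : 0 < Real.sin ((A + C)/2) :=
      Real.sin_pos_of_pos_of_lt_pi (by linarith) (by linarith)
    have hACeq : Real.sin (A + C) = 2 * Real.sin ((A + C)/2) * Real.cos ((A + C)/2) := by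
      have := Real.sin_two_mul ((A + C)/2)
      rwa [show 2 * ((A + C)/2) = A + C by ring] at this
    have hid : Real.sin A + Real.sin (A + C) - Real.sin C
        = 4 * Real.sin (A/2) * Real.cos ((A + C)/2) * Real.cos (C/2) := by
      have := ident1 (A/2) (C/2)
      rw [show 2 * (A/2) + 2 * (C/2) = A + C by ring, show 2 * (A/2) = A by ring,
        show 2 * (C/2) = C by ring, show A/2 + C/2 = (A + C)/2 by ring] at this
      linarith
    rw [habsA, habsAC, hid]
    have hminnn : 0 ≤ min (Real.sin A) (Real.sin (A + C)) := le_min hsA.le hsAC.le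
    have heps1 : epsC C ≤ Real.sin ((π - C)/4) * Real.cos (C/2) := eps_le1 hC0 hCπ
    have hQpos : 0 < Real.sin ((π - C)/4) :=
      Real.sin_pos_of_pos_of_lt_pi (by linarith) (by linarith)
    have hsinAle : Real.sin A ≤ 2 * Real.sin (A/2) := by nlinarith [Real.cos_le_one (A/2)]
    have hsinACle : Real.sin (A + C) ≤ 2 * Real.cos ((A + C)/2) := by
      nlinarith [Real.sin_le_one ((A + C)/2)]
    rcases le_or_gt (Real.sin ((π - C)/4)) (Real.sin (A/2)) with hca | hca
    · have h1 : min (Real.sin A) (Real.sin (A + C)) ≤ 2 * Real.cos ((A + C)/2) :=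
        (min_le_right _ _).trans hsinACle
      calc 2 * epsC C * min (Real.sin A) (Real.sin (A + C))
          ≤ 2 * (Real.sin ((π - C)/4) * Real.cos (C/2)) * (2 * Real.cos ((A + C)/2)) := by
            apply mul_le_mul (by linarith) h1 hminnn (by positivity)
        _ ≤ 4 * Real.sin (A/2) * Real.cos ((A + C)/2) * Real.cos (C/2) := by
            have hint := mul_le_mul_of_nonneg_right hca
              (mul_pos hcAC2 hcC2).le
            nlinarith [hint]
    · have hAle : A/2 ≤ (π - C)/4 := by
        by_contra hcon
        push_neg at hcon
        have := Real.sin_le_sin_of_le_of_le_pi_div_two (x := (π - C)/4) (y := A/2)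
          (by linarith) (by linarith) hcon.le
        linarith
      have hcos_ge : Real.sin ((π - C)/4) ≤ Real.cos ((A + C)/2) := by
        have h1 : Real.cos ((π + C)/4) ≤ Real.cos ((A + C)/2) :=
          Real.cos_le_cos_of_nonneg_of_le_pi (by linarith) (by linarith) (by linarith)
        have h2 : Real.cos ((π + C)/4) = Real.sin ((π - C)/4) := by
          rw [show (π + C)/4 = π/2 - (π - C)/4 by ring, Real.cos_pi_div_two_sub]
        linarith
      have h1 : min (Real.sin A) (Real.sin (A + C)) ≤ 2 * Real.sin (A/2) :=
        (min_le_left _ _).trans hsinAle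
      calc 2 * epsC C * min (Real.sin A) (Real.sin (A + C))
          ≤ 2 * (Real.sin ((π - C)/4) * Real.cos (C/2)) * (2 * Real.sin (A/2)) := by
            apply mul_le_mul (by linarith) h1 hminnn (by positivity)
        _ ≤ 4 * Real.sin (A/2) * Real.cos ((A + C)/2) * Real.cos (C/2) := by
            have hint := mul_le_mul_of_nonneg_right hcos_ge
              (mul_pos hsA2 hcC2).le
            nlinarith [hint]
  · -- Case A + C > π
    have hD0 : 0 < A + C - π := by linarith
    have hDπ : A + C - π < π := by linarith
    have hsD : 0 < Real.sin (A + C - π) := Real.sin_pos_of_pos_of_lt_pi hD0 hDπ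
    have hsinACeq : Real.sin (A + C) = -Real.sin (A + C - π) := by
      have := Real.sin_add_pi (A + C - π)
      rwa [show A + C - π + π = A + C by ring] at this
    have habsAC : |Real.sin (A + C)| = Real.sin (A + C - π) := by
      rw [hsinACeq, abs_neg, abs_of_pos hsD]
    have hsD2 : 0 < Real.sin ((A + C - π)/2) :=
      Real.sin_pos_of_pos_of_lt_pi (by linarith) (by linarith)
    have hcD2 : 0 < Real.cos ((A + C - π)/2) :=
      Real.cos_pos_of_mem_Ioo ⟨by linarith, by linarith⟩
    have hDeq : Real.sin (A + C - π)
        = 2 * Real.sin ((A + C - π)/2) * Real.cos ((A + C - π)/2) := by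
      have := Real.sin_two_mul ((A + C - π)/2)
      rwa [show 2 * ((A + C - π)/2) = A + C - π by ring] at this
    have hcosAC2 : Real.cos ((A + C)/2) = -Real.sin ((A + C - π)/2) := by
      have := Real.cos_add_pi_div_two ((A + C - π)/2)
      rwa [show (A + C - π)/2 + π/2 = (A + C)/2 by ring] at this
    have hid : Real.sin A + Real.sin (A + C - π) - Real.sin C
        = 4 * Real.sin (C/2) * Real.cos (A/2) * Real.sin ((A + C - π)/2) := by
      have := ident2 (A/2) (C/2)
      rw [show 2 * (A/2) + 2 * (C/2) = A + C by ring, show 2 * (A/2) = A by ring,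
        show 2 * (C/2) = C by ring, show A/2 + C/2 = (A + C)/2 by ring, hcosAC2,
        hsinACeq] at this
      linarith
    rw [habsA, habsAC, hid]
    have hminnn : 0 ≤ min (Real.sin A) (Real.sin (A + C - π)) := le_min hsA.le hsD.le
    have heps2 : epsC C ≤ Real.sin (C/4) * Real.sin (C/2) := eps_le2 hC0 hCπ
    have hsC4 : 0 < Real.sin (C/4) :=
      Real.sin_pos_of_pos_of_lt_pi (by linarith) (by linarith)
    have hsinAle : Real.sin A ≤ 2 * Real.cos (A/2) := by nlinarith [Real.sin_le_one (A/2)]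
    have hsinDle : Real.sin (A + C - π) ≤ 2 * Real.sin ((A + C - π)/2) := by
      nlinarith [Real.cos_le_one ((A + C - π)/2)]
    rcases le_or_gt (Real.sin (C/4)) (Real.cos (A/2)) with hca | hca
    · have h1 : min (Real.sin A) (Real.sin (A + C - π)) ≤ 2 * Real.sin ((A + C - π)/2) :=
        (min_le_right _ _).trans hsinDle
      calc 2 * epsC C * min (Real.sin A) (Real.sin (A + C - π))
          ≤ 2 * (Real.sin (C/4) * Real.sin (C/2)) * (2 * Real.sin ((A + C - π)/2)) := by
            apply mul_le_mul (by linarith) h1 hminnn (by positivity)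
        _ ≤ 4 * Real.sin (C/2) * Real.cos (A/2) * Real.sin ((A + C - π)/2) := by
            have hint := mul_le_mul_of_nonneg_right hca
              (mul_pos hsC2 hsD2).le
            nlinarith [hint]
    · have hu : Real.cos (A/2) = Real.sin ((π - A)/2) := by
        rw [show (π - A)/2 = π/2 - A/2 by ring, Real.sin_pi_div_two_sub]
      have hult : (π - A)/2 < C/4 := by
        by_contra hcon
        push_neg at hcon
        have := Real.sin_le_sin_of_le_of_le_pi_div_two (x := C/4) (y := (π - A)/2)
          (by linarith) (by linarith) hcon
        rw [← hu] at this
        linarith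
      have hsinD2_ge : Real.sin (C/4) ≤ Real.sin ((A + C - π)/2) :=
        Real.sin_le_sin_of_le_of_le_pi_div_two (by linarith) (by linarith) (by linarith)
      have h1 : min (Real.sin A) (Real.sin (A + C - π)) ≤ 2 * Real.cos (A/2) :=
        (min_le_left _ _).trans hsinAle
      calc 2 * epsC C * min (Real.sin A) (Real.sin (A + C - π))
          ≤ 2 * (Real.sin (C/4) * Real.sin (C/2)) * (2 * Real.cos (A/2)) := by
            apply mul_le_mul (by linarith) h1 hminnn (by positivity)
        _ ≤ 4 * Real.sin (C/2) * Real.cos (A/2) * Real.sin ((A + C - π)/2) := by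
            have hint := mul_le_mul_of_nonneg_right hsinD2_ge
              (mul_pos hsC2 hcA2).le
            nlinarith [hint]

lemma absSin_shift (x : ℝ) (k : ℤ) : |Real.sin (x + k * π)| = |Real.sin x| := by
  rw [Real.sin_add_int_mul_pi]
  have : |(-1 : ℝ) ^ k| = 1 := by
    rcases Int.even_or_odd k with h | h
    · rw [h.neg_one_zpow]; simp
    · rw [Odd.neg_one_zpow h]; simp
  rw [abs_mul, this, one_mul]

lemma key' (A C : ℝ) (hC0 : 0 < C) (hCπ : C < π) (hA : Real.sin A ≠ 0)
    (hAC : Real.sin (A + C) ≠ 0) :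
    2 * epsC C * min |Real.sin A| |Real.sin (A + C)| ≤
      |Real.sin A| + |Real.sin (A + C)| - Real.sin C := by
  have pi_pos := Real.pi_pos
  set k : ℤ := ⌊A / π⌋ with hk
  set A₀ : ℝ := A - k * π with hA₀
  have h1 : (k : ℝ) * π ≤ A := (le_div_iff₀ pi_pos).mp (Int.floor_le (A / π))
  have h2 : A < ((k : ℝ) + 1) * π := (div_lt_iff₀ pi_pos).mp (Int.lt_floor_add_one (A / π))
  have hA0nonneg : 0 ≤ A₀ := by simp [hA₀]; linarith
  have hA0lt : A₀ < π := by simp [hA₀]; linarith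
  have habs1 : |Real.sin A| = |Real.sin A₀| := by
    rw [show A = A₀ + k * π by simp [hA₀], absSin_shift]
  have habs2 : |Real.sin (A + C)| = |Real.sin (A₀ + C)| := by
    rw [show A + C = (A₀ + C) + k * π by simp [hA₀]; ring, absSin_shift]
  have hA0pos : 0 < A₀ := by
    rcases hA0nonneg.lt_or_eq with h | h
    · exact h
    · exfalso; apply hA
      have : |Real.sin A| = 0 := by rw [habs1, ← h]; simp
      exact abs_eq_zero.mp this
  have hA0C : A₀ + C ≠ π := by
    intro h
    apply hAC
    have : |Real.sin (A + C)| = 0 := by rw [habs2, h]; simp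
    exact abs_eq_zero.mp this
  rw [habs1, habs2]
  exact core A₀ C hA0pos hA0lt hC0 hCπ hA0C

lemma circle_eq_exp (x : ↥(Metric.sphere (0 : ℂ) 1)) :
    (x : ℂ) = Complex.exp ((Complex.arg x : ℂ) * Complex.I) := by
  have hx : ‖(x : ℂ)‖ = 1 := by
    have := x.2
    rwa [mem_sphere_zero_iff_norm] at this
  conv_lhs => rw [← Complex.norm_mul_exp_arg_mul_I (x : ℂ)]
  rw [hx]
  simp

/-- The unit circle `𝕋 ⊆ ℂ` with the inherited Euclidean metric is Gromov concave: for every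
pair of distinct points `x, y` there is `ε > 0` such that the Gromov product
`(x,y)_z = (d(x,z) + d(y,z) - d(x,y))/2` satisfies `(x,y)_z ≥ ε · min(d(x,z), d(y,z))` for
every `z ∈ 𝕋 \ {x,y}`; i.e. every pair of distinct points fails property (Z). -/
theorem stmt_2 (x y : ↥(Metric.sphere (0 : ℂ) 1)) (hxy : x ≠ y) :
    ∃ ε > (0 : ℝ), ∀ z : ↥(Metric.sphere (0 : ℂ) 1), z ≠ x → z ≠ y →
      ε * min (dist x z) (dist y z) ≤ (dist x z + dist y z - dist x y) / 2 := by
  have pi_pos := Real.pi_pos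
  set a := Complex.arg (x : ℂ) with ha
  set b := Complex.arg (y : ℂ) with hb
  -- distances in terms of angles
  have hdistf : ∀ u v : ↥(Metric.sphere (0 : ℂ) 1),
      dist u v = 2 * |Real.sin ((Complex.arg (u:ℂ) - Complex.arg (v:ℂ)) / 2)| := by
    intro u v
    rw [Subtype.dist_eq]
    conv_lhs => rw [circle_eq_exp u, circle_eq_exp v]
    rw [dist_exp_exp]
  set Craw : ℝ := (b - a) / 2 with hCraw
  set k : ℤ := ⌊Craw / π⌋ with hk
  set C : ℝ := Craw - k * π with hC
  have h1 : (k : ℝ) * π ≤ Craw := (le_div_iff₀ pi_pos).mp (Int.floor_le (Craw / π))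
  have h2 : Craw < ((k : ℝ) + 1) * π := (div_lt_iff₀ pi_pos).mp (Int.lt_floor_add_one (Craw / π))
  have hC0 : 0 ≤ C := by simp [hC]; linarith
  have hClt : C < π := by simp [hC]; linarith
  have habsC : |Real.sin Craw| = |Real.sin C| := by
    rw [show Craw = C + k * π by simp [hC], absSin_shift]
  have hdxy : dist x y = 2 * |Real.sin Craw| := by
    rw [hdistf x y, ← ha, ← hb]
    congr 1
    rw [show (a - b)/2 = -Craw by rw [hCraw]; ring, Real.sin_neg, abs_neg]
  have hdxy0 : dist x y ≠ 0 := fun h => hxy (by rwa [dist_eq_zero] at h)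
  have hsinC0 : Real.sin C ≠ 0 := by
    intro h
    apply hdxy0
    rw [hdxy]
    have : |Real.sin Craw| = 0 := by rw [habsC, h]; simp
    rw [this]; ring
  have hCpos : 0 < C := by
    rcases hC0.lt_or_eq with h | h
    · exact h
    · exact absurd (by rw [← h]; simp) hsinC0
  have hsinCpos : 0 < Real.sin C := Real.sin_pos_of_pos_of_lt_pi hCpos hClt
  refine ⟨epsC C, ?_, ?_⟩
  · unfold epsC
    have h1 : 0 < Real.sin (C/4) :=
      Real.sin_pos_of_pos_of_lt_pi (by linarith) (by linarith)
    have h2 : 0 < Real.sin ((π - C)/4) :=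
      Real.sin_pos_of_pos_of_lt_pi (by linarith) (by linarith)
    positivity
  · intro z hzx hzy
    set c := Complex.arg (z : ℂ) with hc
    set A : ℝ := (a - c) / 2 with hA
    have hdxz : dist x z = 2 * |Real.sin A| := by rw [hdistf x z, ← ha, ← hc]
    have hdyz : dist y z = 2 * |Real.sin (A + C)| := by
      rw [hdistf y z, ← hb, ← hc]
      congr 1
      rw [show (b - c)/2 = (A + C) + k * π by rw [hA, hC, hCraw]; ring, absSin_shift]
    have hdxz0 : dist x z ≠ 0 := fun h => hzx (dist_eq_zero.mp h).symm
    have hdyz0 : dist y z ≠ 0 := fun h => hzy (dist_eq_zero.mp h).symm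
    have hsinA : Real.sin A ≠ 0 := by
      intro h; apply hdxz0; rw [hdxz, h]; simp
    have hsinAC : Real.sin (A + C) ≠ 0 := by
      intro h; apply hdyz0; rw [hdyz, h]; simp
    have hkey := key' A C hCpos hClt hsinA hsinAC
    have hdxyC : dist x y = 2 * Real.sin C := by
      rw [hdxy, habsC, abs_of_pos hsinCpos]
    rw [hdxz, hdyz, hdxyC]
    have hmineq : min (2 * |Real.sin A|) (2 * |Real.sin (A + C)|)
        = 2 * min |Real.sin A| |Real.sin (A + C)| := by
      rcases le_total |Real.sin A| |Real.sin (A + C)| with h | h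
      · rw [min_eq_left h, min_eq_left (by linarith)]
      · rw [min_eq_right h, min_eq_right (by linarith)]
    rw [hmineq]
    linarith
end

section
/- Let M be a complete metric space and let p, q ∈ M with p ≠ q. Then at least one of the following holds: (1) there exist x, y ∈ M with x ≠ y, d(p,q) = d(p,x) + d(x,y) + d(y,q), and metric segment [x,y] = {x,y}; or (2) there is a map φ : [0, d(p,q)] → M with d(φ(s),φ(t)) = |s−t| for all s,t, φ(0) = p and φ(d(p,q)) = q (an isometric embedding of the interval joining p to q). -/
/-- Dichotomy in a complete metric space: for `p ≠ q`, either there are `x ≠ y` lying on a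
metric segment between `p` and `q` (i.e. `d(p,q) = d(p,x) + d(x,y) + d(y,q)`) whose metric
segment `[x,y] = {z : d(x,z) + d(z,y) = d(x,y)}` is trivial (`= {x,y}`), or there is an
isometric embedding `φ : [0, d(p,q)] → M` with `φ(0) = p` and `φ(d(p,q)) = q`. -/
theorem stmt_6 {M : Type*} [MetricSpace M] [CompleteSpace M] (p q : M) (hpq : p ≠ q) :
    (∃ x y : M, x ≠ y ∧ dist p q = dist p x + dist x y + dist y q ∧
      {z : M | dist x z + dist z y = dist x y} = {x, y}) ∨
    (∃ φ : ℝ → M, (∀ s ∈ Set.Icc (0 : ℝ) (dist p q), ∀ t ∈ Set.Icc (0 : ℝ) (dist p q),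
        dist (φ s) (φ t) = |s - t|) ∧ φ 0 = p ∧ φ (dist p q) = q) := by
  by_cases h1 : ∃ x y : M, x ≠ y ∧ dist p q = dist p x + dist x y + dist y q ∧
      {z : M | dist x z + dist z y = dist x y} = {x, y}
  · exact Or.inl h1
  right
  push_neg at h1
  set D := dist p q with hD
  -- betweenness: any two distinct aligned points have a strictly intermediate point
  have hbet : ∀ x y : M, x ≠ y → D = dist p x + dist x y + dist y q →
      ∃ z, z ≠ x ∧ z ≠ y ∧ dist x z + dist z y = dist x y := by
    intro x y hxy hal
    have hne := h1 x y hxy hal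
    by_contra hc
    push_neg at hc
    apply hne
    ext z
    simp only [Set.mem_setOf_eq, Set.mem_insert_iff, Set.mem_singleton_iff]
    constructor
    · intro hz
      by_contra hzz
      push_neg at hzz
      exact hc z hzz.1 hzz.2 hz
    · rintro (rfl | rfl) <;> simp [dist_comm]
  -- the family of "linear" sets containing p and q
  set T : Set (Set M) := {K | p ∈ K ∧ q ∈ K ∧
      (∀ z ∈ K, dist p z + dist z q = D) ∧
      (∀ z ∈ K, ∀ w ∈ K, dist z w = |dist p z - dist p w|)} with hT
  have hpqT : ({p, q} : Set M) ∈ T := by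
    refine ⟨Set.mem_insert _ _, Set.mem_insert_of_mem _ rfl, ?_, ?_⟩
    · rintro z (rfl | rfl) <;> simp [hD, dist_comm]
    · rintro z (rfl | rfl) w (rfl | rfl) <;> simp [hD, dist_comm, abs_of_nonneg dist_nonneg]
  -- Zorn's lemma: a maximal linear set
  obtain ⟨K, -, hKT, hKmax⟩ : ∃ K, ({p, q} : Set M) ⊆ K ∧ Maximal (· ∈ T) K := by
    apply zorn_subset_nonempty T ?_ _ hpqT
    intro c hcT hchain hcne
    refine ⟨⋃₀ c, ?_, fun s hs => Set.subset_sUnion_of_mem hs⟩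
    obtain ⟨K0, hK0⟩ := hcne
    refine ⟨Set.mem_sUnion.2 ⟨K0, hK0, (hcT hK0).1⟩, Set.mem_sUnion.2 ⟨K0, hK0, (hcT hK0).2.1⟩,
      ?_, ?_⟩
    · rintro z ⟨K1, hK1, hz⟩
      exact (hcT hK1).2.2.1 z hz
    · rintro z ⟨K1, hK1, hz⟩ w ⟨K2, hK2, hw⟩
      rcases hchain.total hK1 hK2 with h | h
      · exact (hcT hK2).2.2.2 z (h hz) w hw
      · exact (hcT hK1).2.2.2 z hz w (h hw)
  obtain ⟨hpK, hqK, hKS, hKlin⟩ := hKT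
  -- K is closed
  have hKclosed : IsClosed K := by
    have hcl : closure K ∈ T := by
      refine ⟨subset_closure hpK, subset_closure hqK, ?_, ?_⟩
      · have : closure K ⊆ {z | dist p z + dist z q = D} := by
          apply closure_minimal hKS
          exact isClosed_eq ((continuous_const.dist continuous_id).add
            (continuous_id.dist continuous_const)) continuous_const
        exact fun z hz => this hz
      · have hsub : closure K ×ˢ closure K ⊆
            {zw : M × M | dist zw.1 zw.2 = |dist p zw.1 - dist p zw.2|} := by
          rw [← closure_prod_eq]
          apply closure_minimal
          · rintro ⟨z, w⟩ ⟨hz, hw⟩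
            exact hKlin z hz w hw
          · exact isClosed_eq (continuous_fst.dist continuous_snd)
              (((continuous_const.dist continuous_fst).sub
                (continuous_const.dist continuous_snd)).abs)
        exact fun z hz w hw => hsub (Set.mk_mem_prod hz hw)
    have := hKmax hcl subset_closure
    exact isClosed_of_closure_subset this
  -- the image A of K under dist p · is closed
  set A : Set ℝ := (fun z => dist p z) '' K with hA
  have hAclosed : IsClosed A := by
    haveI : CompleteSpace K := hKclosed.completeSpace_coe
    have hiso : Isometry (fun z : K => dist p (z : M)) := by
      apply Isometry.of_dist_eq
      intro z w
      rw [Subtype.dist_eq, hKlin z z.2 w w.2, Real.dist_eq]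
    have := hiso.isClosedEmbedding.isClosed_range
    convert this using 1
    rw [hA]
    ext r
    simp [Set.mem_image, Set.range]
  have h0A : (0 : ℝ) ∈ A := ⟨p, hpK, by simp⟩
  have hDA : D ∈ A := ⟨q, hqK, rfl⟩
  have hAicc : A ⊆ Set.Icc 0 D := by
    rintro r ⟨z, hz, rfl⟩
    refine ⟨dist_nonneg, ?_⟩
    have := hKS z hz
    nlinarith [dist_nonneg (x := z) (y := q)]
  -- A = Icc 0 D
  have hAeq : A = Set.Icc 0 D := by
    refine Set.Subset.antisymm hAicc ?_
    intro r hr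
    by_contra hrA
    -- define the gap around r
    set a := sSup (A ∩ Set.Iic r) with ha
    set b := sInf (A ∩ Set.Ici r) with hb
    have hane : (A ∩ Set.Iic r).Nonempty := ⟨0, h0A, hr.1⟩
    have hbne : (A ∩ Set.Ici r).Nonempty := ⟨D, hDA, hr.2⟩
    have habdd : BddAbove (A ∩ Set.Iic r) := ⟨r, fun x hx => hx.2⟩
    have hbbdd : BddBelow (A ∩ Set.Ici r) := ⟨r, fun x hx => hx.2⟩
    have haclosed : IsClosed (A ∩ Set.Iic r) := hAclosed.inter isClosed_Iic
    have hbclosed : IsClosed (A ∩ Set.Ici r) := hAclosed.inter isClosed_Ici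
    have hamem : a ∈ A ∩ Set.Iic r := haclosed.csSup_mem hane habdd
    have hbmem : b ∈ A ∩ Set.Ici r := hbclosed.csInf_mem hbne hbbdd
    have har : a < r := lt_of_le_of_ne hamem.2 (fun h => hrA (h ▸ hamem.1))
    have hrb : r < b := (hbmem.2).lt_of_ne (fun h => hrA (h ▸ hbmem.1))
    have hab : a < b := har.trans hrb
    -- every element of A avoids the open gap (a, b)
    have hgap : ∀ c ∈ A, c ≤ a ∨ b ≤ c := by
      intro c hc
      rcases le_total c r with h | h
      · exact Or.inl (le_csSup habdd ⟨hc, h⟩)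
      · exact Or.inr (csInf_le hbbdd ⟨hc, h⟩)
    obtain ⟨x, hxK, hxa⟩ := hamem.1
    obtain ⟨y, hyK, hyb⟩ := hbmem.1
    simp only at hxa hyb
    have hxy : dist x y = b - a := by
      rw [hKlin x hxK y hyK, hxa, hyb, abs_sub_comm, abs_of_nonneg (by linarith)]
    have hxyne : x ≠ y := by
      intro h
      rw [h, hyb] at hxa
      exact (ne_of_lt hab) hxa.symm
    have hyq : dist y q = D - b := by
      have := hKS y hyK
      linarith [hyb]
    have halign : D = dist p x + dist x y + dist y q := by
      rw [hxa, hxy, hyq]; ring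
    obtain ⟨z, hzx, hzy, hzseg⟩ := hbet x y hxyne halign
    have hdxz : 0 < dist x z := dist_pos.2 (fun h => hzx h.symm)
    have hdzy : 0 < dist z y := dist_pos.2 hzy
    -- the new point z is aligned with everything
    have hle1 : dist p z ≤ a + dist x z := by
      have := dist_triangle p x z
      linarith [hxa]
    have hzq_le : dist z q ≤ D - a - dist x z := by
      have := dist_triangle z y q
      linarith [hyq, hzseg, hxy]
    have hge1 : a + dist x z ≤ dist p z := by
      have := dist_triangle p z q
      linarith [hzq_le]
    have hfz : dist p z = a + dist x z := le_antisymm hle1 hge1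
    have hzS : dist p z + dist z q = D := by
      have h1 : D ≤ dist p z + dist z q := dist_triangle p z q
      have h2 : dist p z + dist z q ≤ D := by linarith [hfz, hzq_le]
      linarith
    have hfz_lt : dist p z < b := by
      rw [hfz]; linarith [hxy, hzseg]
    have hfz_gt : a < dist p z := by rw [hfz]; linarith
    have hzK : z ∉ K := by
      intro hzK
      rcases hgap _ ⟨z, hzK, rfl⟩ with h | h
      · exact absurd h (not_le.2 hfz_gt)
      · exact absurd h (not_le.2 hfz_lt)
    -- z can be added to K, contradicting maximality
    have hlin' : ∀ w ∈ K, dist z w = |dist p z - dist p w| := by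
      intro w hwK
      have hwA : dist p w ∈ A := ⟨w, hwK, rfl⟩
      rcases hgap _ hwA with hwa | hwb
      · -- dist p w ≤ a
        have hub : dist z w ≤ dist p z - dist p w := by
          have h1 := dist_triangle w x z
          have h2 : dist w x = a - dist p w := by
            rw [hKlin w hwK x hxK, hxa, abs_of_nonpos (by linarith)]; ring
          rw [dist_comm z w]
          linarith [hfz]
        have hlb : dist p z - dist p w ≤ dist z w := by
          have := dist_triangle p w z
          rw [dist_comm w z] at this
          linarith
        rw [le_antisymm hub hlb, abs_of_nonneg (by linarith [hfz])]
      · -- b ≤ dist p w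
        have hub : dist z w ≤ dist p w - dist p z := by
          have h1 := dist_triangle z y w
          have h2 : dist y w = dist p w - b := by
            rw [hKlin y hyK w hwK, hyb, abs_of_nonpos (by linarith)]; ring
          have h3 : dist z y = b - a - dist x z := by linarith [hzseg, hxy]
          linarith [hfz]
        have hlb : dist p w - dist p z ≤ dist z w := by
          have := dist_triangle p z w
          linarith
        rw [le_antisymm hub hlb, abs_of_nonpos (by linarith [hfz, hfz_lt])]
        ring
    have hins : insert z K ∈ T := by
      refine ⟨Set.mem_insert_of_mem _ hpK, Set.mem_insert_of_mem _ hqK, ?_, ?_⟩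
      · rintro w (rfl | hw)
        · exact hzS
        · exact hKS w hw
      · rintro w (rfl | hw) w' (rfl | hw')
        · simp
        · exact hlin' w' hw'
        · rw [dist_comm, hlin' w hw, abs_sub_comm]
        · exact hKlin w hw w' hw'
    exact hzK (hKmax hins (Set.subset_insert z K) (Set.mem_insert z K))
  -- now build φ from K
  classical
  have hex : ∀ s ∈ Set.Icc (0 : ℝ) D, ∃ z, z ∈ K ∧ dist p z = s := by
    intro s hs
    have : s ∈ A := hAeq ▸ hs
    obtain ⟨z, hz, hzs⟩ := this
    exact ⟨z, hz, hzs⟩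
  refine ⟨fun r => if h : ∃ z, z ∈ K ∧ dist p z = r then h.choose else p, ?_, ?_, ?_⟩
  · intro s hs t ht
    have hs' := hex s hs
    have ht' := hex t ht
    simp only [dif_pos hs', dif_pos ht']
    rw [hKlin _ hs'.choose_spec.1 _ ht'.choose_spec.1,
      hs'.choose_spec.2, ht'.choose_spec.2]
  · have h0 : ∃ z, z ∈ K ∧ dist p z = 0 := hex 0 ⟨le_refl 0, dist_nonneg⟩
    simp only [dif_pos h0]
    exact (dist_eq_zero.1 h0.choose_spec.2).symm
  · have hDm : ∃ z, z ∈ K ∧ dist p z = D := hex D ⟨dist_nonneg, le_refl D⟩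
    simp only [dif_pos hDm]
    have h1 := hDm.choose_spec
    have h2 := hKS _ h1.1
    exact dist_eq_zero.1 (by linarith [h1.2])
end

section
/- Let M be a complete metric space containing no isometric copy of a nondegenerate interval (there is no L > 0 and no map φ : [0,L] → M with d(φ(s),φ(t)) = |s−t| for all s,t), and let Y be a Banach space. Then a Lipschitz map f : M → Y strongly attains its norm if and only if there exist x ≠ y in M with ‖f(x)−f(y)‖ = ‖f‖_L·d(x,y) and metric segment [x,y] = {x,y}. -/
/-- The least Lipschitz constant of a map between a metric space and a normed space,
defined as the supremum of the difference quotients. -/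
noncomputable def lipNorm {M : Type*} [MetricSpace M] {Y : Type*} [NormedAddCommGroup Y]
    (f : M → Y) : ℝ :=
  sSup {r : ℝ | ∃ x y : M, x ≠ y ∧ r = ‖f x - f y‖ / dist x y}

/-- `f` is a Lipschitz map. -/
def IsLip {M : Type*} [MetricSpace M] {Y : Type*} [NormedAddCommGroup Y] (f : M → Y) : Prop :=
  ∃ K : NNReal, LipschitzWith K f

/-- `f` strongly attains its norm. -/
def StronglyAttains {M : Type*} [MetricSpace M] {Y : Type*} [NormedAddCommGroup Y]
    (f : M → Y) : Prop :=
  ∃ x y : M, x ≠ y ∧ ‖f x - f y‖ = lipNorm f * dist x y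

/-- If the complete metric space `M` contains no isometric copy of a nondegenerate interval
and `Y` is a Banach space, then a Lipschitz map `f : M → Y` strongly attains its norm iff it
attains it at a pair `x ≠ y` whose metric segment `[x,y]` is trivial. -/
theorem stmt_7 {M : Type*} [MetricSpace M] [CompleteSpace M]
    (hM : ¬ ∃ (L : ℝ) (φ : ℝ → M), 0 < L ∧
      ∀ s ∈ Set.Icc (0 : ℝ) L, ∀ t ∈ Set.Icc (0 : ℝ) L, dist (φ s) (φ t) = |s - t|)
    {Y : Type*} [NormedAddCommGroup Y] [NormedSpace ℝ Y] [CompleteSpace Y]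
    (f : M → Y) (hf : IsLip f) :
    StronglyAttains f ↔
      ∃ x y : M, x ≠ y ∧ ‖f x - f y‖ = lipNorm f * dist x y ∧
        {z : M | dist x z + dist z y = dist x y} = {x, y} := by
  constructor
  · rintro ⟨x, y, hxy, hatt⟩
    by_contra hcon
    push_neg at hcon
    classical
    obtain ⟨K, hK⟩ := hf
    have hd : 0 < dist x y := dist_pos.mpr hxy
    -- the Lipschitz bound with constant `lipNorm f`
    have hLb : ∀ u v : M, ‖f u - f v‖ ≤ lipNorm f * dist u v := by
      intro u v
      rcases eq_or_ne u v with rfl | huv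
      · simp
      · have hpos : 0 < dist u v := dist_pos.mpr huv
        have hbdd : BddAbove {r : ℝ | ∃ a b : M, a ≠ b ∧ r = ‖f a - f b‖ / dist a b} := by
          refine ⟨K, ?_⟩
          rintro r ⟨a, b, hab, rfl⟩
          have h1 := hK.dist_le_mul a b
          rw [dist_eq_norm] at h1
          rw [div_le_iff₀ (dist_pos.mpr hab)]
          exact h1
        have hmem : ‖f u - f v‖ / dist u v ∈
            {r : ℝ | ∃ a b : M, a ≠ b ∧ r = ‖f a - f b‖ / dist a b} := ⟨u, v, huv, rfl⟩
        have hle := le_csSup hbdd hmem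
        rw [div_le_iff₀ hpos] at hle
        exact hle
    -- splitting of the attainment along a point of the metric segment
    have hsplit : ∀ p q z : M, ‖f p - f q‖ = lipNorm f * dist p q →
        dist p z + dist z q = dist p q →
        ‖f p - f z‖ = lipNorm f * dist p z ∧ ‖f z - f q‖ = lipNorm f * dist z q := by
      intro p q z h1 h2
      have t1 := hLb p z
      have t2 := hLb z q
      have tri : dist (f p) (f q) ≤ dist (f p) (f z) + dist (f z) (f q) :=
        dist_triangle (f p) (f z) (f q)
      simp only [dist_eq_norm] at tri
      have key : lipNorm f * dist p z + lipNorm f * dist z q = lipNorm f * dist p q := by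
        rw [← mul_add, h2]
      constructor <;> linarith
    -- the family of chains inside the metric segment [x, y]
    set P : Set (Set M) := {C | x ∈ C ∧ y ∈ C ∧
        (∀ z ∈ C, dist x z + dist z y = dist x y) ∧
        (∀ u ∈ C, ∀ v ∈ C, dist x u + dist u v = dist x v ∨
          dist x v + dist v u = dist x u)} with hP
    have hbase : ({x, y} : Set M) ∈ P := by
      refine ⟨Or.inl rfl, Or.inr rfl, ?_, ?_⟩
      · rintro z (rfl | rfl) <;> simp [dist_self]
      · rintro u (rfl | rfl) v (rfl | rfl)
        · left; simp [dist_self]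
        · left; simp [dist_self]
        · right; simp [dist_self]
        · left; simp [dist_self]
    obtain ⟨C, hsubC, hCmax⟩ := zorn_subset_nonempty P (fun c hcP hcchain hcne => by
      obtain ⟨C0, hC0⟩ := hcne
      refine ⟨⋃₀ c, ⟨⟨C0, hC0, (hcP hC0).1⟩, ⟨C0, hC0, (hcP hC0).2.1⟩, ?_, ?_⟩,
        fun s hs => Set.subset_sUnion_of_mem hs⟩
      · rintro z ⟨D, hD, hzD⟩
        exact (hcP hD).2.2.1 z hzD
      · rintro u ⟨D1, hD1, hu⟩ v ⟨D2, hD2, hv⟩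
        rcases hcchain.total hD1 hD2 with h | h
        · exact (hcP hD2).2.2.2 u (h hu) v hv
        · exact (hcP hD1).2.2.2 u hu v (h hv)) {x, y} hbase
    have hCP : C ∈ P := hCmax.1
    obtain ⟨hCx, hCy, hCseg, hCch⟩ := hCP
    -- C is closed
    have hWcl : IsClosed {p : M × M | dist x p.1 + dist p.1 p.2 = dist x p.2} :=
      isClosed_eq (by fun_prop) (by fun_prop)
    have hCcl : IsClosed C := by
      have hclP : closure C ∈ P := by
        refine ⟨subset_closure hCx, subset_closure hCy, ?_, ?_⟩
        · intro z hz
          have hSegcl : IsClosed {z : M | dist x z + dist z y = dist x y} :=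
            isClosed_eq (by fun_prop) continuous_const
          exact closure_minimal hCseg hSegcl hz
        · intro u hu v hv
          obtain ⟨un, hun, hul⟩ := mem_closure_iff_seq_limit.mp hu
          obtain ⟨vn, hvn, hvl⟩ := mem_closure_iff_seq_limit.mp hv
          have hor : ∀ n : ℕ, (un n, vn n) ∈
                {p : M × M | dist x p.1 + dist p.1 p.2 = dist x p.2} ∨
              (vn n, un n) ∈ {p : M × M | dist x p.1 + dist p.1 p.2 = dist x p.2} := by
            intro n
            exact hCch (un n) (hun n) (vn n) (hvn n)
          have hev : ∃ᶠ n in Filter.atTop, ((un n, vn n) ∈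
                {p : M × M | dist x p.1 + dist p.1 p.2 = dist x p.2} ∨
              (vn n, un n) ∈ {p : M × M | dist x p.1 + dist p.1 p.2 = dist x p.2}) :=
            Filter.Eventually.frequently (Filter.Eventually.of_forall hor)
          have hfreq := Filter.frequently_or_distrib.mp hev
          rcases hfreq with h | h
          · left
            have := mem_closure_of_frequently_of_tendsto h (hul.prodMk_nhds hvl)
            rwa [hWcl.closure_eq] at this
          · right
            have := mem_closure_of_frequently_of_tendsto h (hvl.prodMk_nhds hul)
            rwa [hWcl.closure_eq] at this
      exact isClosed_of_closure_subset (hCmax.2 hclP subset_closure)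
    -- distances inside C are recovered from distances to x
    have hdistC : ∀ u ∈ C, ∀ v ∈ C, dist u v = |dist x u - dist x v| := by
      intro u hu v hv
      rcases hCch u hu v hv with h | h
      · have h1 : dist u v = dist x v - dist x u := by linarith
        rw [h1, abs_sub_comm, abs_of_nonneg (by linarith [dist_nonneg (x := u) (y := v)])]
      · have h1 : dist u v = dist x u - dist x v := by
          rw [dist_comm]; linarith
        rw [h1, abs_of_nonneg (by linarith [dist_nonneg (x := u) (y := v), dist_comm u v])]
    -- the image of C under distance to x is closed
    set S : Set ℝ := (fun z => dist x z) '' C with hS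
    have hSclosed : IsClosed S := by
      refine IsSeqClosed.isClosed ?_
      intro sn s hsn hlim
      choose z hz hdz' using hsn
      have hdz : ∀ n, dist x (z n) = sn n := hdz'
      have hcz : CauchySeq z := by
        rw [Metric.cauchySeq_iff]
        intro ε hε
        obtain ⟨N, hN⟩ := Metric.cauchySeq_iff.mp hlim.cauchySeq ε hε
        refine ⟨N, fun m hm n hn => ?_⟩
        rw [hdistC _ (hz m) _ (hz n), hdz, hdz]
        simpa [Real.dist_eq] using hN m hm n hn
      obtain ⟨w, hw⟩ := cauchySeq_tendsto_of_complete hcz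
      have hwC : w ∈ C := hCcl.mem_of_tendsto hw (Filter.Eventually.of_forall hz)
      refine ⟨w, hwC, ?_⟩
      have h1 : Filter.Tendsto (fun n => dist x (z n)) Filter.atTop (nhds (dist x w)) :=
        tendsto_const_nhds.dist hw
      have h2 : (fun n => dist x (z n)) = sn := funext hdz
      rw [h2] at h1
      exact tendsto_nhds_unique h1 hlim
    by_cases hT : ∀ t ∈ Set.Icc (0 : ℝ) (dist x y), ∃ z ∈ C, dist x z = t
    · -- we get an isometric copy of [0, dist x y] : contradiction
      exact absurd ⟨dist x y, fun t => if h : ∃ z ∈ C, dist x z = t then h.choose else x, hd,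
        by
          have key : ∀ t ∈ Set.Icc (0 : ℝ) (dist x y),
              (if h : ∃ z ∈ C, dist x z = t then h.choose else x) ∈ C ∧
              dist x (if h : ∃ z ∈ C, dist x z = t then h.choose else x) = t := by
            intro t ht
            have h := hT t ht
            rw [dif_pos h]
            exact ⟨h.choose_spec.1, h.choose_spec.2⟩
          intro s hs t ht
          obtain ⟨hs1, hs2⟩ := key s hs
          obtain ⟨ht1, ht2⟩ := key t ht
          rw [hdistC _ hs1 _ ht1, hs2, ht2]⟩ hM
    · push_neg at hT
      obtain ⟨t, ht, htn⟩ := hT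
      have hbddA : BddAbove (S ∩ Set.Iic t) := ⟨t, fun r hr => hr.2⟩
      have hbddB : BddBelow (S ∩ Set.Ici t) := ⟨t, fun r hr => hr.2⟩
      have hAne : (S ∩ Set.Iic t).Nonempty := ⟨0, ⟨x, hCx, dist_self x⟩, ht.1⟩
      have hBne : (S ∩ Set.Ici t).Nonempty := ⟨dist x y, ⟨y, hCy, rfl⟩, ht.2⟩
      have hA : sSup (S ∩ Set.Iic t) ∈ S ∩ Set.Iic t :=
        (hSclosed.inter isClosed_Iic).csSup_mem hAne hbddA
      have hB : sInf (S ∩ Set.Ici t) ∈ S ∩ Set.Ici t :=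
        (hSclosed.inter isClosed_Ici).csInf_mem hBne hbddB
      set a := sSup (S ∩ Set.Iic t) with ha
      set b := sInf (S ∩ Set.Ici t) with hb
      obtain ⟨⟨u, huC, hua'⟩, hat⟩ := hA
      obtain ⟨⟨v, hvC, hvb'⟩, htb⟩ := hB
      have hua : dist x u = a := hua'
      have hvb : dist x v = b := hvb'
      have halt : a < t := lt_of_le_of_ne hat (fun h => htn u huC (by rw [hua, h]))
      have hbgt : t < b := lt_of_le_of_ne htb (fun h => htn v hvC (by rw [hvb, ← h]))
      have hab : a < b := halt.trans hbgt
      have hgap : ∀ z ∈ C, dist x z ≤ a ∨ b ≤ dist x z := by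
        intro z hz
        rcases le_total (dist x z) t with h | h
        · exact Or.inl (le_csSup hbddA ⟨⟨z, hz, rfl⟩, h⟩)
        · exact Or.inr (csInf_le hbddB ⟨⟨z, hz, rfl⟩, h⟩)
      have huseg := hCseg u huC
      have hvseg := hCseg v hvC
      have hduv : dist u v = b - a := by
        rw [hdistC u huC v hvC, hua, hvb, abs_sub_comm, abs_of_nonneg (by linarith)]
      have huvne : u ≠ v := by
        intro h
        rw [h, dist_self] at hduv
        linarith
      -- attainment at (u, v)
      have h1 := (hsplit x y u hatt huseg).2
      have hsum : dist u v + dist v y = dist u y := by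
        rw [hduv]
        have e1 : dist u y = dist x y - a := by rw [← hua]; linarith
        have e2 : dist v y = dist x y - b := by rw [← hvb]; linarith
        rw [e1, e2]; ring
      have h2 : ‖f u - f v‖ = lipNorm f * dist u v := by
        exact (hsplit u y v h1 hsum).1
      -- contradiction with hcon : the metric segment [u, v] is trivial
      refine hcon u v huvne h2 ?_
      ext z
      simp only [Set.mem_setOf_eq, Set.mem_insert_iff, Set.mem_singleton_iff]
      constructor
      · intro hz
        have e1 : dist x z ≤ dist x u + dist u z := dist_triangle x u z
        have e2 : dist z y ≤ dist z v + dist v y := dist_triangle z v y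
        have e3 : dist x y ≤ dist x z + dist z y := dist_triangle x z y
        have hvy : dist v y = dist x y - b := by rw [← hvb]; linarith
        have hxz : dist x z = a + dist u z := by linarith
        have hxz' : dist x z = b - dist z v := by linarith [hduv]
        have hzseg : dist x z + dist z y = dist x y := by linarith
        -- z is comparable with every element of C
        have hcomp : ∀ c ∈ C, dist x c + dist c z = dist x z ∨
            dist x z + dist z c = dist x c := by
          intro c hc
          rcases hCch c hc u huC with hcu | huc
          · left
            have t1 : dist c z ≤ dist c u + dist u z := dist_triangle c u z
            have t2 : dist x z ≤ dist x c + dist c z := dist_triangle x c z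
            linarith
          · rcases hCch v hvC c hc with hvc | hcv
            · right
              have t1 : dist z c ≤ dist z v + dist v c := dist_triangle z v c
              have t2 : dist x c ≤ dist x z + dist z c := dist_triangle x z c
              linarith
            · rcases hgap c hc with h | h
              · have hc0 : dist u c = 0 := le_antisymm (by linarith) dist_nonneg
                have hce : u = c := dist_eq_zero.mp hc0
                left
                rw [← hce]
                linarith
              · have hc0 : dist c v = 0 := le_antisymm (by linarith) dist_nonneg
                have hce : c = v := dist_eq_zero.mp hc0
                right
                rw [hce]
                have := dist_comm z v
                linarith
        have hzP : C ∪ {z} ∈ P := by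
          refine ⟨Or.inl hCx, Or.inl hCy, ?_, ?_⟩
          · rintro w (hw | rfl)
            · exact hCseg w hw
            · exact hzseg
          · rintro w1 (hw1 | rfl) w2 (hw2 | rfl)
            · exact hCch w1 hw1 w2 hw2
            · exact hcomp w1 hw1
            · rcases hcomp w2 hw2 with h | h
              · exact Or.inr h
              · exact Or.inl h
            · left; simp [dist_self]
        have hzC : z ∈ C := hCmax.2 hzP Set.subset_union_left (Or.inr rfl)
        rcases hgap z hzC with h | h
        · left
          have : dist u z = 0 := le_antisymm (by linarith [hxz]) dist_nonneg
          exact (dist_eq_zero.mp this).symm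
        · right
          have : dist z v = 0 := le_antisymm (by linarith [hxz']) dist_nonneg
          exact dist_eq_zero.mp this
      · rintro (rfl | rfl)
        · simp [dist_self]
        · simp [dist_self]
  · rintro ⟨x, y, hxy, hatt, -⟩
    exact ⟨x, y, hxy, hatt⟩
end

section
/- Let M be a compact metric space, Y a Banach space, and f : M → Y a Lipschitz map with ‖f‖_L = 1. Assume there exist x ≠ y in M with ‖f(x)−f(y)‖ = d(x,y) and metric segment [x,y] = {x,y}. Then for every ε > 0 there exists a non-local Lipschitz map φ : M → Y with ‖f−φ‖_L ≤ ε. -/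
/-- `f` is a local map: it approximates its Lipschitz norm at arbitrarily close pairs. -/
def IsLocalMap {M : Type*} [MetricSpace M] {Y : Type*} [NormedAddCommGroup Y]
    (f : M → Y) : Prop :=
  ∀ ε > (0 : ℝ), ∃ x y : M, x ≠ y ∧ dist x y < ε ∧
    ‖f x - f y‖ > (lipNorm f - ε) * dist x y

namespace Stmt8Aux

noncomputable def cost (δ c t : ℝ) : ℝ := if t < δ then (1 - c) * t else (1 + c) * t

lemma cost_nonneg {δ c t : ℝ} (hc0 : 0 ≤ c) (hc1 : c ≤ 1) (ht : 0 ≤ t) : 0 ≤ cost δ c t := by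
  unfold cost; split
  · exact mul_nonneg (by linarith) ht
  · exact mul_nonneg (by linarith) ht

lemma le_cost {δ c t : ℝ} (hc0 : 0 ≤ c) (ht : 0 ≤ t) : (1 - c) * t ≤ cost δ c t := by
  unfold cost; split
  · exact le_rfl
  · exact mul_le_mul_of_nonneg_right (by linarith) ht

lemma cost_le {δ c t : ℝ} (hc0 : 0 ≤ c) (ht : 0 ≤ t) : cost δ c t ≤ (1 + c) * t := by
  unfold cost; split
  · exact mul_le_mul_of_nonneg_right (by linarith) ht
  · exact le_rfl

lemma cost_of_lt {δ c t : ℝ} (h : t < δ) : cost δ c t = (1 - c) * t := if_pos h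

variable {M : Type*} [MetricSpace M]

noncomputable def chainCost (δ c : ℝ) (z : ℕ → M) (n : ℕ) : ℝ :=
  ∑ i ∈ Finset.range n, cost δ c (dist (z i) (z (i + 1)))

def chainSet (δ c : ℝ) (x p : M) : Set ℝ :=
  {r | ∃ (n : ℕ) (z : ℕ → M), z 0 = x ∧ z n = p ∧ r = chainCost δ c z n}

lemma chainSet_nonempty (δ c : ℝ) (x p : M) : (chainSet δ c x p).Nonempty := by
  refine ⟨cost δ c (dist x p), 1, fun i => if i = 0 then x else p, by simp, by simp, ?_⟩
  simp [chainCost]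

lemma chainCost_nonneg {δ c : ℝ} (hc0 : 0 ≤ c) (hc1 : c ≤ 1) (z : ℕ → M) (n : ℕ) :
    0 ≤ chainCost δ c z n :=
  Finset.sum_nonneg fun _ _ => cost_nonneg hc0 hc1 dist_nonneg

lemma chainSet_bddBelow {δ c : ℝ} (hc0 : 0 ≤ c) (hc1 : c ≤ 1) (x p : M) :
    BddBelow (chainSet δ c x p) := by
  refine ⟨0, ?_⟩
  rintro r ⟨n, z, _, _, rfl⟩
  exact chainCost_nonneg hc0 hc1 z n

noncomputable def ell (δ c : ℝ) (x p : M) : ℝ := sInf (chainSet δ c x p)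

lemma ell_nonneg {δ c : ℝ} (hc0 : 0 ≤ c) (hc1 : c ≤ 1) (x p : M) : 0 ≤ ell δ c x p :=
  le_csInf (chainSet_nonempty δ c x p)
    (by rintro r ⟨n, z, _, _, rfl⟩; exact chainCost_nonneg hc0 hc1 z n)

lemma ell_self_le {δ c : ℝ} (hc0 : 0 ≤ c) (hc1 : c ≤ 1) (x : M) : ell δ c x x ≤ 0 := by
  apply csInf_le (chainSet_bddBelow hc0 hc1 x x)
  exact ⟨0, fun _ => x, rfl, rfl, by simp [chainCost]⟩

lemma ell_le {δ c : ℝ} (hc0 : 0 ≤ c) (hc1 : c ≤ 1) (x p q : M) :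
    ell δ c x q ≤ ell δ c x p + cost δ c (dist p q) := by
  have key : ∀ r ∈ chainSet δ c x p, ell δ c x q ≤ r + cost δ c (dist p q) := by
    rintro r ⟨n, z, h0, hn, rfl⟩
    apply csInf_le (chainSet_bddBelow hc0 hc1 x q)
    refine ⟨n + 1, fun i => if i ≤ n then z i else q, by simp [h0], by simp, ?_⟩
    unfold chainCost
    rw [Finset.sum_range_succ]
    congr 1
    · apply Finset.sum_congr rfl
      intro i hi
      have hi' : i < n := Finset.mem_range.mp hi
      simp [Nat.le_of_lt hi', Nat.succ_le_of_lt hi']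
    · simp [hn]
  have h2 : ell δ c x q - cost δ c (dist p q) ≤ ell δ c x p := by
    apply le_csInf (chainSet_nonempty δ c x p)
    intro r hr
    linarith [key r hr]
  linarith


lemma chain_main {x y : M} {d η c : ℝ} (hd : d = dist x y) (hd0 : 0 < d)
    (hc0 : 0 < c) (hc2 : c ≤ 1 / 2) (hcη : c * (d + η) ≤ η) (hη0 : 0 < η)
    (hann : ∀ z : M, d / 4 ≤ dist x z → dist x z ≤ 3 * d / 4 →
      d + η ≤ dist x z + dist z y)
    (n : ℕ) (z : ℕ → M) (h0 : z 0 = x) (hn : z n = y) :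
    d ≤ chainCost (d / 4) c z n := by
  classical
  set D : ℕ → ℝ := fun i => dist (z i) (z (i + 1)) with hD
  set S : ℝ := ∑ i ∈ Finset.range n, D i with hS
  have hSd : d ≤ S := by
    rw [hd, ← h0, ← hn]
    exact dist_le_range_sum_dist z n
  have hCS : (1 - c) * S ≤ chainCost (d / 4) c z n := by
    rw [hS, Finset.mul_sum]
    exact Finset.sum_le_sum fun i _ => le_cost hc0.le dist_nonneg
  by_cases hA : ∃ j, j ≤ n ∧ d / 4 ≤ dist x (z j) ∧ dist x (z j) ≤ 3 * d / 4
  · obtain ⟨j, hjn, h1, h2⟩ := hA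
    have hsplit : dist x (z j) + dist (z j) y ≤ S := by
      have e1 : dist x (z j) ≤ ∑ i ∈ Finset.range j, D i := by
        rw [← h0]; exact dist_le_range_sum_dist z j
      have e2 : dist (z j) y ≤ ∑ i ∈ Finset.Ico j n, D i := by
        rw [← hn]; exact dist_le_Ico_sum_dist (fun i => z i) hjn
      have e3 : (∑ i ∈ Finset.range j, D i) + ∑ i ∈ Finset.Ico j n, D i = S := by
        rw [hS, Finset.range_eq_Ico, Finset.range_eq_Ico]
        exact Finset.sum_Ico_consecutive D (Nat.zero_le j) hjn
      linarith
    have hSη : d + η ≤ S := le_trans (hann _ h1 h2) hsplit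
    nlinarith [hCS]
  · push_neg at hA
    -- hA : ∀ j ≤ n, d/4 ≤ dist x (z j) → ¬ dist x (z j) ≤ 3d/4? check
    have hn0 : n ≠ 0 := by
      rintro rfl
      rw [h0] at hn
      rw [hn] at hd
      simp at hd
      linarith
    have hPn : 3 * d / 4 < dist x (z n) := by rw [hn, ← hd]; linarith
    have hexP : ∃ j, 3 * d / 4 < dist x (z j) := ⟨n, hPn⟩
    have hspec : 3 * d / 4 < dist x (z (Nat.find hexP)) := Nat.find_spec hexP
    have hin : Nat.find hexP ≤ n := Nat.find_le hPn
    have hi0 : Nat.find hexP ≠ 0 := by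
      intro h
      rw [h, h0] at hspec
      simp at hspec
      linarith
    obtain ⟨j, hij⟩ := Nat.exists_eq_succ_of_ne_zero hi0
    rw [hij] at hspec hin
    have hjn : j < n := Nat.lt_of_succ_le hin
    have hjle : dist x (z j) ≤ 3 * d / 4 :=
      le_of_not_gt (Nat.find_min hexP (by rw [hij]; exact Nat.lt_succ_self j))
    have hjlt : dist x (z j) < d / 4 := by
      by_contra hcon
      push_neg at hcon
      exact absurd hjle (not_le.mpr (hA j (Nat.le_of_lt hjn) hcon))
    have hstep : d / 2 < D j := by
      have htri := dist_triangle x (z j) (z (j + 1))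
      have hs' : 3 * d / 4 < dist x (z (j + 1)) := hspec
      have : D j = dist (z j) (z (j + 1)) := rfl
      rw [this]
      linarith
    have hcostj : cost (d / 4) c (D j) = (1 + c) * D j := by
      unfold cost
      rw [if_neg]
      push_neg
      linarith
    have hbonus : (1 - c) * D j + c * d ≤ cost (d / 4) c (D j) := by
      rw [hcostj]; nlinarith
    have hsum : c * d ≤ ∑ i ∈ Finset.range n, (cost (d / 4) c (D i) - (1 - c) * D i) := by
      have hterm : ∀ i ∈ Finset.range n, 0 ≤ cost (d / 4) c (D i) - (1 - c) * D i :=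
        fun i _ => sub_nonneg.mpr (le_cost hc0.le dist_nonneg)
      have hj : c * d ≤ cost (d / 4) c (D j) - (1 - c) * D j := by linarith
      exact le_trans hj
        (Finset.single_le_sum hterm (Finset.mem_range.mpr hjn))
    have hsplit2 : (∑ i ∈ Finset.range n, (cost (d / 4) c (D i) - (1 - c) * D i))
        = chainCost (d / 4) c z n - (1 - c) * S := by
      rw [hS, Finset.mul_sum, Finset.sum_sub_distrib]
      rfl
    rw [hsplit2] at hsum
    nlinarith


lemma ell_y_ge {x y : M} {d η c : ℝ} (hd : d = dist x y) (hd0 : 0 < d)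
    (hc0 : 0 < c) (hc2 : c ≤ 1 / 2) (hcη : c * (d + η) ≤ η) (hη0 : 0 < η)
    (hann : ∀ z : M, d / 4 ≤ dist x z → dist x z ≤ 3 * d / 4 →
      d + η ≤ dist x z + dist z y) :
    d ≤ ell (d / 4) c x y := by
  apply le_csInf (chainSet_nonempty _ _ _ _)
  rintro r ⟨n, z, h0, hn, rfl⟩
  exact chain_main hd hd0 hc0 hc2 hcη hη0 hann n z h0 hn

end Stmt8Aux

open Stmt8Aux

/-- Let `M` be compact, `Y` Banach, `f : M → Y` Lipschitz with `‖f‖_L = 1` attaining its norm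
at a pair `x ≠ y` with trivial metric segment `[x,y] = {x,y}`. Then `f` can be approximated
arbitrarily well (in Lipschitz distance) by non-local Lipschitz maps. -/
theorem stmt_8 {M : Type*} [MetricSpace M] [CompactSpace M]
    {Y : Type*} [NormedAddCommGroup Y] [NormedSpace ℝ Y] [CompleteSpace Y]
    (f : M → Y) (hf : IsLip f) (hnorm : lipNorm f = 1)
    (x y : M) (hxy : x ≠ y) (hatt : ‖f x - f y‖ = dist x y)
    (hseg : {z : M | dist x z + dist z y = dist x y} = {x, y})
    (ε : ℝ) (hε : 0 < ε) :
    ∃ φ : M → Y, IsLip φ ∧ ¬ IsLocalMap φ ∧ lipNorm (fun p => f p - φ p) ≤ ε := by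
  classical
  set d := dist x y with hd
  have hd0 : 0 < d := dist_pos.2 hxy
  -- annulus gap
  obtain ⟨η, hη0, hann⟩ : ∃ η > (0 : ℝ), ∀ z : M, d / 4 ≤ dist x z →
      dist x z ≤ 3 * d / 4 → d + η ≤ dist x z + dist z y := by
    set A : Set M := {z | dist x z ∈ Set.Icc (d / 4) (3 * d / 4)} with hA
    by_cases hAne : A.Nonempty
    · have hAclosed : IsClosed A := isClosed_Icc.preimage (continuous_const.dist continuous_id)
      have hAcomp : IsCompact A := hAclosed.isCompact
      have hcont : Continuous fun z : M => dist x z + dist z y :=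
        (continuous_const.dist continuous_id).add (continuous_id.dist continuous_const)
      obtain ⟨z₀, hz₀A, hmin⟩ := hAcomp.exists_isMinOn hAne hcont.continuousOn
      have hz₀1 : d / 4 ≤ dist x z₀ := hz₀A.1
      have hz₀2 : dist x z₀ ≤ 3 * d / 4 := hz₀A.2
      have htri : d ≤ dist x z₀ + dist z₀ y := dist_triangle x z₀ y
      have hne : dist x z₀ + dist z₀ y ≠ d := by
        intro heq
        have : z₀ ∈ ({x, y} : Set M) := by
          rw [← hseg]; exact heq
        rcases this with h | h
        · rw [h] at hz₀1; simp at hz₀1; linarith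
        · rw [h] at hz₀2
          rw [← hd] at hz₀2
          linarith
      refine ⟨dist x z₀ + dist z₀ y - d, by cases lt_or_eq_of_le htri with
        | inl h => linarith
        | inr h => exact absurd h.symm hne, ?_⟩
      intro z h1 h2
      have : dist x z₀ + dist z₀ y ≤ dist x z + dist z y := hmin ⟨h1, h2⟩
      linarith
    · refine ⟨1, one_pos, fun z h1 h2 => absurd ⟨z, ⟨h1, h2⟩⟩ hAne⟩
  set c := min (1 / 2 : ℝ) (η / (d + η)) with hc
  have hdη : 0 < d + η := by linarith
  have hc0 : 0 < c := lt_min (by norm_num) (div_pos hη0 hdη)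
  have hc2 : c ≤ 1 / 2 := min_le_left _ _
  have hc1 : c ≤ 1 := hc2.trans (by norm_num)
  have hcη : c * (d + η) ≤ η := by
    have h := min_le_right (1 / 2 : ℝ) (η / (d + η))
    calc c * (d + η) ≤ η / (d + η) * (d + η) := mul_le_mul_of_nonneg_right h hdη.le
      _ = η := div_mul_cancel₀ η hdη.ne'
  set δ := d / 4 with hδ
  set g : M → ℝ := fun p => max 0 (d - ell δ c x p) with hg
  have hgx : g x = d := by
    have h1 := ell_self_le (δ := δ) hc0.le hc1 x
    have h2 := ell_nonneg (δ := δ) hc0.le hc1 x x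
    have he : ell δ c x x = 0 := le_antisymm h1 h2
    simp [hg, he, hd0.le]
  have hgy : g y = 0 := by
    have h1 : d ≤ ell δ c x y := ell_y_ge hd hd0 hc0 hc2 hcη hη0 hann
    simp only [hg]
    exact max_eq_left (by linarith)
  have hgdiff : ∀ p q : M, |g p - g q| ≤ cost δ c (dist p q) := by
    have key : ∀ p q : M, g p - g q ≤ cost δ c (dist p q) := by
      intro p q
      have hcn : 0 ≤ cost δ c (dist p q) := cost_nonneg hc0.le hc1 dist_nonneg
      rcases le_or_gt (d - ell δ c x p) 0 with hle | hlt
      · have : g p = 0 := max_eq_left hle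
        rw [this]
        have : 0 ≤ g q := le_max_left _ _
        linarith
      · have hgp : g p = d - ell δ c x p := max_eq_right hlt.le
        have hgq : d - ell δ c x q ≤ g q := le_max_right _ _
        have hext := ell_le (δ := δ) hc0.le hc1 x p q
        linarith
    intro p q
    rw [abs_sub_le_iff]
    refine ⟨key p q, ?_⟩
    rw [dist_comm]
    exact key q p
  -- the perturbation
  set u : Y := d⁻¹ • (f x - f y) with hu
  have hu1 : ‖u‖ = 1 := by
    rw [hu, norm_smul, hatt, Real.norm_eq_abs, abs_of_pos (inv_pos.2 hd0)]
    field_simp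
  set t := ε / (1 + c) with ht
  have h1c : (0 : ℝ) < 1 + c := by linarith
  have ht0 : 0 < t := div_pos hε h1c
  have htc : t * (1 + c) = ε := div_mul_cancel₀ ε h1c.ne'
  set φ : M → Y := fun p => f p + (t * g p) • u with hφ
  -- pointwise Lipschitz bound for f
  have hfK : ∀ p q : M, ‖f p - f q‖ ≤ dist p q := by
    intro p q
    rcases eq_or_ne p q with rfl | hpq
    · simp
    · obtain ⟨K, hK⟩ := hf
      have hbdd : BddAbove {r : ℝ | ∃ a b : M, a ≠ b ∧ r = ‖f a - f b‖ / dist a b} := by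
        refine ⟨K, ?_⟩
        rintro r ⟨a, b, hab, rfl⟩
        rw [div_le_iff₀ (dist_pos.2 hab)]
        calc ‖f a - f b‖ = dist (f a) (f b) := (dist_eq_norm _ _).symm
          _ ≤ K * dist a b := hK.dist_le_mul a b
      have hmem : ‖f p - f q‖ / dist p q ∈
          {r : ℝ | ∃ a b : M, a ≠ b ∧ r = ‖f a - f b‖ / dist a b} := ⟨p, q, hpq, rfl⟩
      have hle : ‖f p - f q‖ / dist p q ≤ 1 := by
        rw [← hnorm]
        exact le_csSup hbdd hmem
      rw [div_le_one (dist_pos.2 hpq)] at hle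
      linarith
  have hφdiff : ∀ p q : M, φ p - φ q = (f p - f q) + (t * (g p - g q)) • u := by
    intro p q
    simp only [hφ, mul_sub, sub_smul]
    abel
  have hφle : ∀ p q : M, ‖φ p - φ q‖ ≤ dist p q + t * cost δ c (dist p q) := by
    intro p q
    rw [hφdiff]
    calc ‖(f p - f q) + (t * (g p - g q)) • u‖
        ≤ ‖f p - f q‖ + ‖(t * (g p - g q)) • u‖ := norm_add_le _ _
      _ = ‖f p - f q‖ + |t| * |g p - g q| * ‖u‖ := by rw [norm_smul, Real.norm_eq_abs, abs_mul]
      _ = ‖f p - f q‖ + t * |g p - g q| := by rw [hu1, abs_of_pos ht0, mul_one]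
      _ ≤ dist p q + t * cost δ c (dist p q) := by
          have := hgdiff p q
          have := hfK p q
          nlinarith [ht0.le]
  have hφglobal : ∀ p q : M, ‖φ p - φ q‖ ≤ (1 + ε) * dist p q := by
    intro p q
    have h1 := hφle p q
    have h2 : cost δ c (dist p q) ≤ (1 + c) * dist p q := cost_le hc0.le dist_nonneg
    nlinarith [dist_nonneg (x := p) (y := q), ht0.le, htc]
  have hφxy : φ x - φ y = (1 + t) • (f x - f y) := by
    rw [hφdiff, hgx, hgy, sub_zero, hu, smul_smul]
    rw [mul_inv_cancel_right₀ hd0.ne']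
    rw [add_smul, one_smul]
  have hφratio : ‖φ x - φ y‖ / dist x y = 1 + t := by
    rw [hφxy, norm_smul, Real.norm_eq_abs, abs_of_pos (by linarith : (0:ℝ) < 1 + t), hatt]
    rw [← hd]
    field_simp
  have hφbdd : BddAbove {r : ℝ | ∃ a b : M, a ≠ b ∧ r = ‖φ a - φ b‖ / dist a b} := by
    refine ⟨1 + ε, ?_⟩
    rintro r ⟨a, b, hab, rfl⟩
    rw [div_le_iff₀ (dist_pos.2 hab)]
    exact hφglobal a b
  have hlipφ : 1 + t ≤ lipNorm φ := by
    rw [← hφratio]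
    exact le_csSup hφbdd ⟨x, y, hxy, rfl⟩
  refine ⟨φ, ?_, ?_, ?_⟩
  · refine ⟨Real.toNNReal (1 + ε), LipschitzWith.of_dist_le_mul fun p q => ?_⟩
    rw [Real.coe_toNNReal _ (by linarith), dist_eq_norm]
    exact hφglobal p q
  · intro hloc
    set ε₀ := min δ (t * c) with hε₀def
    have hε₀0 : 0 < ε₀ := lt_min (by rw [hδ]; linarith) (mul_pos ht0 hc0)
    obtain ⟨p, q, hpq, hdist, hgt⟩ := hloc ε₀ hε₀0
    have hdistδ : dist p q < δ := lt_of_lt_of_le hdist (min_le_left _ _)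
    have hcost : cost δ c (dist p q) = (1 - c) * dist p q := cost_of_lt hdistδ
    have h1 : ‖φ p - φ q‖ ≤ (1 + t - t * c) * dist p q := by
      have := hφle p q
      rw [hcost] at this
      nlinarith [dist_nonneg (x := p) (y := q)]
    have hε₀tc : ε₀ ≤ t * c := min_le_right _ _
    have h2 : (1 + t - t * c) * dist p q ≤ (lipNorm φ - ε₀) * dist p q := by
      apply mul_le_mul_of_nonneg_right _ dist_nonneg
      linarith
    linarith [hgt]
  · apply Real.sSup_le _ hε.le
    rintro r ⟨a, b, hab, rfl⟩
    have hdiff : (fun p => f p - φ p) a - (fun p => f p - φ p) b = (t * (g b - g a)) • u := by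
      simp only [hφ, mul_sub, sub_smul]
      abel
    rw [hdiff, div_le_iff₀ (dist_pos.2 hab), norm_smul, Real.norm_eq_abs, abs_mul,
      hu1, mul_one, abs_of_pos ht0]
    have h1 : |g b - g a| ≤ cost δ c (dist a b) := by
      rw [abs_sub_comm]
      exact hgdiff a b
    have h2 : cost δ c (dist a b) ≤ (1 + c) * dist a b := cost_le hc0.le dist_nonneg
    calc t * |g b - g a| ≤ t * cost δ c (dist a b) := mul_le_mul_of_nonneg_left h1 ht0.le
      _ ≤ t * ((1 + c) * dist a b) := mul_le_mul_of_nonneg_left h2 ht0.le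
      _ = ε * dist a b := by rw [← htc]; ring
end

section
/- Let M be a compact metric space, Y a Banach space, and f : M → Y a non-local Lipschitz map with ‖f‖_L = 1. Then there exist x ≠ y in M such that ‖f(x)−f(y)‖ = d(x,y) and the pair (x,y) fails property (Z), i.e. there exists ε > 0 with (x,y)_z ≥ ε·min{d(x,z),d(y,z)} for every z ∈ M \ {x,y}. In particular f strongly attains its norm. -/
/-- Let `M` be compact, `Y` Banach, and `f : M → Y` a non-local Lipschitz map with
`‖f‖_L = 1`. Then `f` attains its norm at a pair `(x,y)` failing property (Z): there is
`ε > 0` with `(x,y)_z ≥ ε · min(d(x,z), d(y,z))` for all `z ∉ {x,y}`. -/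
theorem stmt_9 {M : Type*} [MetricSpace M] [CompactSpace M]
    {Y : Type*} [NormedAddCommGroup Y] [NormedSpace ℝ Y] [CompleteSpace Y]
    (f : M → Y) (hf : IsLip f) (hnorm : lipNorm f = 1) (hnl : ¬ IsLocalMap f) :
    ∃ x y : M, x ≠ y ∧ ‖f x - f y‖ = dist x y ∧
      ∃ ε > (0 : ℝ), ∀ z : M, z ≠ x → z ≠ y →
        ε * min (dist x z) (dist y z) ≤ (dist x z + dist y z - dist x y) / 2 := by
  classical
  obtain ⟨K, hK⟩ := hf
  have hfc : Continuous f := hK.continuous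
  set S : Set ℝ := {r : ℝ | ∃ x y : M, x ≠ y ∧ r = ‖f x - f y‖ / dist x y} with hSdef
  have hsup : sSup S = 1 := hnorm
  have hbdd : BddAbove S := by
    refine ⟨K, ?_⟩
    rintro r ⟨a, b, hab, rfl⟩
    have hd : 0 < dist a b := dist_pos.2 hab
    rw [div_le_iff₀ hd]
    calc ‖f a - f b‖ = dist (f a) (f b) := (dist_eq_norm _ _).symm
      _ ≤ K * dist a b := hK.dist_le_mul a b
  have hle : ∀ a b : M, ‖f a - f b‖ ≤ dist a b := by
    intro a b
    rcases eq_or_ne a b with rfl | hab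
    · simp
    · have hd : 0 < dist a b := dist_pos.2 hab
      have h1 : ‖f a - f b‖ / dist a b ≤ 1 := hsup ▸ le_csSup hbdd ⟨a, b, hab, rfl⟩
      calc ‖f a - f b‖ = ‖f a - f b‖ / dist a b * dist a b := by field_simp
        _ ≤ 1 * dist a b := by exact mul_le_mul_of_nonneg_right h1 hd.le
        _ = dist a b := one_mul _
  -- nonlocality
  rw [IsLocalMap] at hnl
  push_neg at hnl
  obtain ⟨ε₀, hε₀, hnl⟩ := hnl
  rw [hnorm] at hnl
  -- approximation from the sup
  have happrox : ∀ τ : ℝ, 0 < τ → ∃ a b : M, a ≠ b ∧ (1 - τ) * dist a b < ‖f a - f b‖ := by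
    intro τ hτ
    have hne : S.Nonempty := by
      by_contra h
      rw [Set.not_nonempty_iff_eq_empty] at h
      rw [h, Real.sSup_empty] at hsup
      norm_num at hsup
    obtain ⟨r, hrS, hr⟩ := exists_lt_of_lt_csSup hne (show (1 - τ : ℝ) < sSup S by
      rw [hsup]; linarith)
    obtain ⟨a, b, hab, rfl⟩ := hrS
    have hd : 0 < dist a b := dist_pos.2 hab
    exact ⟨a, b, hab, (lt_div_iff₀ hd).1 hr⟩
  -- pairs close to attaining must be far apart
  have hfar : ∀ a b : M, a ≠ b → (1 - ε₀) * dist a b < ‖f a - f b‖ → ε₀ ≤ dist a b := by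
    intro a b hab h
    by_contra hlt
    push_neg at hlt
    exact absurd (hnl a b hab hlt) (not_le.2 h)
  -- diameter
  set D := Metric.diam (Set.univ : Set M) with hDdef
  have hDle : ∀ a b : M, dist a b ≤ D :=
    fun a b => Metric.dist_le_diam_of_mem isCompact_univ.isBounded trivial trivial
  -- Stage 1: attaining pair exists
  set T : Set (M × M) := {p | ε₀ ≤ dist p.1 p.2} with hTdef
  have hTc : IsClosed T := isClosed_le continuous_const (continuous_fst.dist continuous_snd)
  have hTne : T.Nonempty := by
    obtain ⟨a, b, hab, h⟩ := happrox ε₀ hε₀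
    exact ⟨(a, b), hfar a b hab h⟩
  set ψ : M × M → ℝ := fun p => ‖f p.1 - f p.2‖ - dist p.1 p.2 with hψdef
  have hψcont : Continuous ψ :=
    (((hfc.comp continuous_fst).sub (hfc.comp continuous_snd)).norm).sub
      (continuous_fst.dist continuous_snd)
  obtain ⟨p₀, hp₀T, hp₀max⟩ := hTc.isCompact.exists_isMaxOn hTne hψcont.continuousOn
  have hD0 : 0 < D := lt_of_lt_of_le hε₀ (le_trans hp₀T (hDle _ _))
  have hψle : ∀ p : M × M, ψ p ≤ 0 := fun p => sub_nonpos.2 (hle _ _)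
  have hψ0 : ψ p₀ = 0 := by
    rcases (hψle p₀).lt_or_eq with h | h
    · exfalso
      set η := -ψ p₀ with hηdef
      have hη : 0 < η := by simp only [hηdef]; linarith
      have hτ : 0 < min ε₀ (η / D) := lt_min hε₀ (div_pos hη hD0)
      obtain ⟨a, b, hab, hab2⟩ := happrox _ hτ
      have hd : 0 < dist a b := dist_pos.2 hab
      have hττ : min ε₀ (η / D) ≤ ε₀ := min_le_left _ _
      have h1 : (1 - ε₀) * dist a b < ‖f a - f b‖ := by nlinarith
      have hT : (a, b) ∈ T := hfar a b hab h1
      have h2 : ψ (a, b) ≤ ψ p₀ := hp₀max hT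
      have h2' : ‖f a - f b‖ - dist a b ≤ ψ p₀ := h2
      have h3 : min ε₀ (η / D) * dist a b ≤ η := by
        calc min ε₀ (η / D) * dist a b ≤ (η / D) * D := by
              apply mul_le_mul (min_le_right _ _) (hDle a b) hd.le (div_pos hη hD0).le
          _ = η := by field_simp
      have hη' : ψ p₀ = -η := by simp only [hηdef]; ring
      have hexp : (1 - min ε₀ (η / D)) * dist a b
          = dist a b - min ε₀ (η / D) * dist a b := by ring
      rw [hexp] at hab2
      clear_value η ψ D S
      linarith
    · exact h
  -- Stage 2: minimize distance over attaining pairs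
  set A : Set (M × M) := T ∩ {p | ψ p = 0} with hAdef
  have hAc : IsClosed A := hTc.inter (isClosed_eq hψcont continuous_const)
  have hAne : A.Nonempty := ⟨p₀, hp₀T, hψ0⟩
  obtain ⟨p, hpA, hpmin⟩ := hAc.isCompact.exists_isMinOn hAne
    ((continuous_fst.dist continuous_snd)).continuousOn
  obtain ⟨hpT, hpψ⟩ := hpA
  set x := p.1 with hxdef
  set y := p.2 with hydef
  have hxyε : ε₀ ≤ dist x y := hpT
  have hxyat : ‖f x - f y‖ = dist x y := sub_eq_zero.1 hpψ
  have hxy : x ≠ y := dist_pos.1 (lt_of_lt_of_le hε₀ hxyε)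
  -- key lemma for the near case
  have key : ∀ a b z : M, ‖f a - f b‖ = dist a b → z ≠ a → dist a z < ε₀ →
      ε₀ * dist a z ≤ dist a z + dist b z - dist a b := by
    intro a b z hat hza hlt
    have haz : a ≠ z := hza.symm
    have hb : ‖f a - f z‖ ≤ (1 - ε₀) * dist a z := hnl a z haz hlt
    have htri : dist (f a) (f b) ≤ dist (f a) (f z) + dist (f z) (f b) := dist_triangle _ _ _
    rw [dist_eq_norm, dist_eq_norm, dist_eq_norm] at htri
    have h2 : ‖f z - f b‖ ≤ dist z b := hle z b
    have h3 : dist z b = dist b z := dist_comm _ _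
    linarith
  -- Stage 3
  refine ⟨x, y, hxy, hxyat, ?_⟩
  set K' : Set M := {z | ε₀ ≤ dist x z ∧ ε₀ ≤ dist y z} with hK'def
  have hK'c : IsClosed K' :=
    (isClosed_le continuous_const (continuous_const.dist continuous_id)).inter
      (isClosed_le continuous_const (continuous_const.dist continuous_id))
  rcases Set.eq_empty_or_nonempty K' with hK'e | hK'ne
  · -- K' empty: every z is near x or near y
    refine ⟨ε₀ / 2, by linarith, ?_⟩
    intro z hzx hzy
    have hz : dist x z < ε₀ ∨ dist y z < ε₀ := by
      by_contra h
      push_neg at h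
      have hzK : z ∈ K' := ⟨h.1, h.2⟩
      rw [hK'e] at hzK
      exact hzK
    rcases hz with h | h
    · have := key x y z hxyat hzx h
      have hm : min (dist x z) (dist y z) ≤ dist x z := min_le_left _ _
      have hm0 : 0 ≤ min (dist x z) (dist y z) := le_min dist_nonneg dist_nonneg
      nlinarith
    · have := key y x z (by rw [norm_sub_rev, hxyat]; exact dist_comm x y) hzy h
      have hm : min (dist x z) (dist y z) ≤ dist y z := min_le_right _ _
      have hm0 : 0 ≤ min (dist x z) (dist y z) := le_min dist_nonneg dist_nonneg
      have hc : dist y x = dist x y := dist_comm _ _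
      nlinarith
  · -- K' nonempty: minimize the Gromov sum over K'
    have hgc : Continuous (fun z : M => dist x z + dist y z) :=
      (continuous_const.dist continuous_id).add (continuous_const.dist continuous_id)
    obtain ⟨z₀, hz₀K, hz₀min⟩ := hK'c.isCompact.exists_isMinOn hK'ne hgc.continuousOn
    set c : ℝ := dist x z₀ + dist y z₀ - dist x y with hcdef
    have hc0 : 0 ≤ c := by
      have := dist_triangle x z₀ y
      have h1 : dist z₀ y = dist y z₀ := dist_comm _ _
      linarith
    have hcpos : 0 < c := by
      rcases hc0.lt_or_eq with h | h
      · exact h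
      · exfalso
        have hsum : dist x z₀ + dist y z₀ = dist x y := by linarith
        have h1 : ‖f x - f z₀‖ ≤ dist x z₀ := hle _ _
        have h2 : ‖f z₀ - f y‖ ≤ dist z₀ y := hle _ _
        have htri : dist (f x) (f y) ≤ dist (f x) (f z₀) + dist (f z₀) (f y) := dist_triangle _ _ _
        rw [dist_eq_norm, dist_eq_norm, dist_eq_norm] at htri
        have h3 : dist z₀ y = dist y z₀ := dist_comm _ _
        have hat1 : ‖f x - f z₀‖ = dist x z₀ := by linarith
        have hAz : (x, z₀) ∈ A := ⟨hz₀K.1, sub_eq_zero.2 hat1⟩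
        have hmin : dist x y ≤ dist x z₀ := hpmin hAz
        have h5 : ε₀ ≤ dist y z₀ := hz₀K.2
        have hε₀' : (0:ℝ) < ε₀ := hε₀
        linarith
    refine ⟨min (ε₀ / 2) (c / (2 * D)), lt_min (by linarith) (div_pos hcpos (by linarith)), ?_⟩
    intro z hzx hzy
    have hm0 : 0 ≤ min (dist x z) (dist y z) := le_min dist_nonneg dist_nonneg
    by_cases h1 : dist x z < ε₀
    · have := key x y z hxyat hzx h1
      have hm : min (dist x z) (dist y z) ≤ dist x z := min_le_left _ _
      have hε : min (ε₀ / 2) (c / (2 * D)) ≤ ε₀ / 2 := min_le_left _ _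
      have hε' : 0 ≤ min (ε₀ / 2) (c / (2 * D)) :=
        le_min (by linarith) (div_pos hcpos (by linarith)).le
      nlinarith
    · by_cases h2 : dist y z < ε₀
      · have := key y x z (by rw [norm_sub_rev, hxyat]; exact dist_comm x y) hzy h2
        have hm : min (dist x z) (dist y z) ≤ dist y z := min_le_right _ _
        have hε : min (ε₀ / 2) (c / (2 * D)) ≤ ε₀ / 2 := min_le_left _ _
        have hε' : 0 ≤ min (ε₀ / 2) (c / (2 * D)) :=
          le_min (by linarith) (div_pos hcpos (by linarith)).le
        have hc' : dist y x = dist x y := dist_comm _ _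
        nlinarith
      · have hzK : z ∈ K' := ⟨le_of_not_gt h1, le_of_not_gt h2⟩
        have hS : dist x z₀ + dist y z₀ ≤ dist x z + dist y z := hz₀min hzK
        have hmD : min (dist x z) (dist y z) ≤ D := (min_le_left _ _).trans (hDle _ _)
        have hε : min (ε₀ / 2) (c / (2 * D)) ≤ c / (2 * D) := min_le_right _ _
        have hε' : 0 ≤ min (ε₀ / 2) (c / (2 * D)) :=
          le_min (by linarith) (div_pos hcpos (by linarith)).le
        have hkey : min (ε₀ / 2) (c / (2 * D)) * min (dist x z) (dist y z) ≤ c / 2 := by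
          calc min (ε₀ / 2) (c / (2 * D)) * min (dist x z) (dist y z)
              ≤ (c / (2 * D)) * D := mul_le_mul hε hmD hm0 (div_pos hcpos (by linarith)).le
            _ = c / 2 := by field_simp
        linarith
end
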